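/- arXiv:2204.02910 — 5 statements merged into one kernel-verified Lean document; each statement's English description precedes it below -/
import Mathlib

section
/- Each cluster of n-permutations contains exactly one pair of twins. That is, for every permutation σ of [n-1], among the n permutations x of [n] with reduce(x_1⋯x_{n-1}) = σ, there is exactly one unordered pair {π, τ} of distinct permutations with |π_1 − π_n| = |τ_1 − τ_n| = 1. -/
/-- `reduce w` replaces each copy of the i-th smallest value of `w` by `i`. -/
def reduce {m : ℕ} (w : Fin m → ℕ) : Fin m → ℕ :=
  fun i => ((Finset.univ.image w).filter (fun v => v ≤ w i)).card

/-- The first `n-1` letters of a word of length `n`. -/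
def firstw {n : ℕ} (w : Fin n → ℕ) : Fin (n - 1) → ℕ :=
  fun i => w (Fin.castLE (Nat.sub_le n 1) i)

/-- The last `n-1` letters of a word of length `n`. -/
def lastw {n : ℕ} (w : Fin n → ℕ) : Fin (n - 1) → ℕ :=
  fun i => w ⟨i.val + 1, by have := i.isLt; omega⟩

/-- The word (with letters in `{1,…,n}`) associated with a permutation of `[n]`. -/
def permWord {n : ℕ} (x : Equiv.Perm (Fin n)) : Fin n → ℕ := fun i => (x i : ℕ) + 1

/-- The word of a permutation of `[n-1]` indexing a cluster. -/
def clusterWord {n : ℕ} (σ : Equiv.Perm (Fin (n - 1))) : Fin (n - 1) → ℕ :=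
  fun i => (σ i : ℕ) + 1

/-- `x` is an edge of the cluster graph from `σ` to `τ`:
`reduce(x₁⋯x_{n-1}) = σ` and `reduce(x₂⋯x_n) = τ`. -/
def isEdge {n : ℕ} (x : Equiv.Perm (Fin n)) (σ τ : Equiv.Perm (Fin (n - 1))) : Prop :=
  reduce (firstw (permWord x)) = clusterWord σ ∧ reduce (lastw (permWord x)) = clusterWord τ

open Finset Fin

/-- rank within a finset is injective on the finset -/
private lemma rank_injOn {N : ℕ} (S : Finset (Fin N)) {s t : Fin N} (hs : s ∈ S) (ht : t ∈ S)
    (h : (S.filter (· ≤ s)).card = (S.filter (· ≤ t)).card) : s = t := by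
  have key : ∀ u v : Fin N, v ∈ S → u < v →
      (S.filter (· ≤ u)).card < (S.filter (· ≤ v)).card := by
    intro u v hv huv
    apply Finset.card_lt_card
    constructor
    · intro z hz
      simp only [Finset.mem_filter] at hz ⊢
      exact ⟨hz.1, hz.2.trans huv.le⟩
    · intro hsub
      have := hsub (Finset.mem_filter.mpr ⟨hv, le_refl v⟩)
      simp only [Finset.mem_filter] at this
      exact absurd this.2 (not_le.mpr huv)
  rcases lt_trichotomy s t with hlt | he | hlt
  · exact absurd h (Nat.ne_of_lt (key s t ht hlt))
  · exact he
  · exact absurd h.symm (Nat.ne_of_lt (key t s hs hlt))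

private lemma rank_perm {M : ℕ} (σ : Equiv.Perm (Fin M)) (i : Fin M) :
    (Finset.univ.filter fun j => σ j ≤ σ i).card = (σ i : ℕ) + 1 := by
  have h1 : (Finset.univ.image (⇑σ)).filter (· ≤ σ i)
      = (Finset.univ.filter fun j => σ j ≤ σ i).image σ := Finset.filter_image
  have h2 : (Finset.univ.image (⇑σ)) = Finset.univ := Finset.image_univ_equiv σ
  have h3 : Finset.univ.filter (· ≤ σ i) = Finset.Iic (σ i) := by ext v; simp
  rw [h2, h3] at h1
  have := congrArg Finset.card h1
  rw [Fin.card_Iic, Finset.card_image_of_injective _ σ.injective] at this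
  omega

private lemma rank_image {N M : ℕ} (f : Fin M → Fin N) (hf : Function.Injective f) (i : Fin M) :
    ((Finset.univ.image f).filter (· ≤ f i)).card
      = (Finset.univ.filter fun j => f j ≤ f i).card := by
  rw [Finset.filter_image, Finset.card_image_of_injective _ hf]

private lemma reduce_firstw {m : ℕ} (x : Equiv.Perm (Fin (m + 2))) (i : Fin (m + 1)) :
    reduce (firstw (permWord x)) i
      = (Finset.univ.filter fun j : Fin (m + 1) => x j.castSucc ≤ x i.castSucc).card := by
  have hcast : ∀ j : Fin (m + 1),
      (Fin.castLE (Nat.sub_le (m + 2) 1) j : Fin (m + 2)) = j.castSucc := fun j => rfl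
  have hw : ∀ j : Fin (m + 1), firstw (permWord x) j = (x j.castSucc : ℕ) + 1 := by
    intro j; simp [firstw, permWord, hcast]
  have hinj : Function.Injective (firstw (permWord x)) := by
    intro a b hab
    rw [hw, hw] at hab
    exact Fin.castSucc_injective _ (x.injective (Fin.val_injective (by omega)))
  unfold reduce
  rw [Finset.filter_image, Finset.card_image_of_injective _ hinj]
  congr 1
  apply Finset.filter_congr
  intro j _
  rw [hw, hw, Fin.le_def]
  omega

/-- the cluster member of `σ` with last value `k` -/
private def xk {m : ℕ} (σ : Equiv.Perm (Fin (m + 1))) (k : Fin (m + 2)) :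
    Equiv.Perm (Fin (m + 2)) :=
  (finSuccEquivLast.trans (Equiv.optionCongr σ)).trans (finSuccEquiv' k).symm

private lemma xk_castSucc {m : ℕ} (σ : Equiv.Perm (Fin (m + 1))) (k : Fin (m + 2))
    (i : Fin (m + 1)) : xk σ k i.castSucc = k.succAbove (σ i) := by
  simp [xk, finSuccEquivLast_castSucc, finSuccEquiv'_symm_some]

private lemma xk_last {m : ℕ} (σ : Equiv.Perm (Fin (m + 1))) (k : Fin (m + 2)) :
    xk σ k (Fin.last (m + 1)) = k := by
  simp [xk, finSuccEquivLast_last, finSuccEquiv'_symm_none]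

private lemma reduce_xk {m : ℕ} (σ : Equiv.Perm (Fin (m + 1))) (k : Fin (m + 2)) :
    reduce (firstw (permWord (xk σ k))) = clusterWord σ := by
  funext i
  rw [reduce_firstw]
  show _ = (σ i : ℕ) + 1
  simp only [xk_castSucc, Fin.succAbove_le_succAbove_iff]
  exact rank_perm σ i

private lemma eq_xk {m : ℕ} (σ : Equiv.Perm (Fin (m + 1))) (x : Equiv.Perm (Fin (m + 2)))
    (h : reduce (firstw (permWord x)) = clusterWord σ) :
    x = xk σ (x (Fin.last (m + 1))) := by
  set k := x (Fin.last (m + 1)) with hk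
  set f : Fin (m + 1) → Fin (m + 2) := fun j => x j.castSucc with hf
  set g : Fin (m + 1) → Fin (m + 2) := fun j => k.succAbove (σ j) with hg
  have hfinj : Function.Injective f := fun a b hab =>
    Fin.castSucc_injective _ (x.injective hab)
  have hginj : Function.Injective g := fun a b hab =>
    σ.injective (Fin.succAbove_right_injective hab)
  have himg : ∀ u : Fin (m + 1) → Fin (m + 2), Function.Injective u → (∀ j, u j ≠ k) →
      Finset.univ.image u = Finset.univ.erase k := by
    intro u hu hne
    apply Finset.eq_of_subset_of_card_le
    · intro v hv
      simp only [Finset.mem_image] at hv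
      obtain ⟨j, _, rfl⟩ := hv
      exact Finset.mem_erase.mpr ⟨hne j, Finset.mem_univ _⟩
    · rw [Finset.card_erase_of_mem (Finset.mem_univ k),
        Finset.card_image_of_injective _ hu]
      simp
  have himgf : Finset.univ.image f = Finset.univ.erase k :=
    himg f hfinj fun j hj => (Fin.castSucc_lt_last j).ne (x.injective hj)
  have himgg : Finset.univ.image g = Finset.univ.erase k :=
    himg g hginj fun j => Fin.succAbove_ne k (σ j)
  have hrank : ∀ i, (Finset.univ.filter fun j => f j ≤ f i).card = (σ i : ℕ) + 1 := by
    intro i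
    have hi := congrFun h i
    rw [reduce_firstw] at hi
    exact hi
  have hrankg : ∀ i, (Finset.univ.filter fun j => g j ≤ g i).card = (σ i : ℕ) + 1 := by
    intro i
    simp only [hg, Fin.succAbove_le_succAbove_iff]
    exact rank_perm σ i
  apply Equiv.ext
  intro p
  induction p using Fin.lastCases with
  | last =>
    rw [xk_last]
  | cast i =>
    rw [xk_castSucc]
    show f i = g i
    have l1 : ((Finset.univ.erase k).filter (· ≤ f i)).card = (σ i : ℕ) + 1 := by
      rw [← himgf, rank_image f hfinj, hrank]
    have l2 : ((Finset.univ.erase k).filter (· ≤ g i)).card = (σ i : ℕ) + 1 := by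
      rw [← himgg, rank_image g hginj, hrankg]
    refine rank_injOn (Finset.univ.erase k) ?_ ?_ ?_
    · rw [← himgf]; exact Finset.mem_image_of_mem f (Finset.mem_univ i)
    · rw [← himgg]; exact Finset.mem_image_of_mem g (Finset.mem_univ i)
    · rw [l1, l2]

/-- Each cluster contains exactly one pair of twins. -/
theorem cluster_unique_twin_pair (n : ℕ) (hn : 2 ≤ n) (σ : Equiv.Perm (Fin (n - 1))) :
    ∃! p : Sym2 (Equiv.Perm (Fin n)), ∃ x y : Equiv.Perm (Fin n),
      p = s(x, y) ∧ x ≠ y ∧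
      reduce (firstw (permWord x)) = clusterWord σ ∧
      reduce (firstw (permWord y)) = clusterWord σ ∧
      ((x ⟨0, by omega⟩ : ℕ) + 1 = x ⟨n - 1, by omega⟩ ∨
        (x ⟨n - 1, by omega⟩ : ℕ) + 1 = x ⟨0, by omega⟩) ∧
      ((y ⟨0, by omega⟩ : ℕ) + 1 = y ⟨n - 1, by omega⟩ ∨
        (y ⟨n - 1, by omega⟩ : ℕ) + 1 = y ⟨0, by omega⟩) := by
  obtain ⟨m, rfl⟩ : ∃ m, n = m + 2 := ⟨n - 2, by omega⟩

  set a : Fin (m + 1) := σ (0 : Fin (m + 1)) with ha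
  have twinc : ∀ k : Fin (m + 2),
      ((k.succAbove a : ℕ) + 1 = (k : ℕ) ∨ (k : ℕ) + 1 = (k.succAbove a : ℕ))
      ↔ (k = a.castSucc ∨ k = a.succ) := by
    intro k
    rcases lt_or_ge a.castSucc k with hlt | hle
    · rw [Fin.succAbove_of_castSucc_lt _ _ hlt]
      rw [Fin.lt_def] at hlt
      simp only [Fin.ext_iff, Fin.coe_castSucc, Fin.val_succ] at *
      omega
    · rw [Fin.succAbove_of_le_castSucc _ _ hle]
      rw [Fin.le_def] at hle
      simp only [Fin.ext_iff, Fin.coe_castSucc, Fin.val_succ] at *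
      omega
  have exk : ∀ k : Fin (m + 2),
      ((xk σ k ((0 : Fin (m + 1)).castSucc) : ℕ) + 1 = xk σ k (Fin.last (m + 1)) ∨
        (xk σ k (Fin.last (m + 1)) : ℕ) + 1 = xk σ k ((0 : Fin (m + 1)).castSucc))
      ↔ ((k.succAbove a : ℕ) + 1 = (k : ℕ) ∨ (k : ℕ) + 1 = (k.succAbove a : ℕ)) := by
    intro k
    rw [xk_castSucc, xk_last]
  refine ⟨s(xk σ a.castSucc, xk σ a.succ),
    ⟨xk σ a.castSucc, xk σ a.succ, rfl, ?_, reduce_xk σ _, reduce_xk σ _,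
      (exk _).mpr ((twinc _).mpr (Or.inl rfl)),
      (exk _).mpr ((twinc _).mpr (Or.inr rfl))⟩, ?_⟩
  · intro hcontra
    have h1 := congrArg (fun e : Equiv.Perm (Fin (m + 2)) => e (Fin.last (m + 1))) hcontra
    simp only [xk_last] at h1
    have := congrArg Fin.val h1
    simp only [Fin.coe_castSucc, Fin.val_succ] at this
    omega
  · rintro p ⟨x, y, rfl, hxy, hx, hy, tx, ty⟩
    have ex := eq_xk σ x hx
    have ey := eq_xk σ y hy
    have tx' : x (Fin.last (m + 1)) = a.castSucc ∨ x (Fin.last (m + 1)) = a.succ := by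
      apply (twinc _).mp
      apply (exk _).mp
      rw [← ex]
      exact tx
    have ty' : y (Fin.last (m + 1)) = a.castSucc ∨ y (Fin.last (m + 1)) = a.succ := by
      apply (twinc _).mp
      apply (exk _).mp
      rw [← ey]
      exact ty
    have hk : x (Fin.last (m + 1)) ≠ y (Fin.last (m + 1)) := by
      intro hh
      exact hxy (by rw [ex, ey, hh])
    rcases tx' with h1 | h1 <;> rcases ty' with h2 | h2
    · exact absurd (h1.trans h2.symm) hk
    · rw [ex, ey, h1, h2]
    · rw [ex, ey, h1, h2]
      exact Sym2.eq_swap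
    · exact absurd (h1.trans h2.symm) hk
end

section
/- In the cluster graph for n-permutations, for each cluster X there exists a unique cluster Y such that there are exactly two edges from X to Y, and there is no pair of clusters with three or more parallel edges. Equivalently: for each permutation σ of [n-1], there is a unique permutation τ of [n-1] such that exactly two permutations x of [n] satisfy reduce(x_1⋯x_{n-1}) = σ and reduce(x_2⋯x_n) = τ, and no τ admits three or more such x. -/
section Aux
variable {m : ℕ}

/-- `w` has the same comparison pattern as the permutation `π`. -/
def Cmp (w : Fin m → ℕ) (π : Equiv.Perm (Fin m)) : Prop :=
  ∀ i j, w i ≤ w j ↔ π i ≤ π j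

lemma Cmp.inj {w : Fin m → ℕ} {π : Equiv.Perm (Fin m)} (h : Cmp w π) :
    Function.Injective w := by
  intro i j hij
  exact π.injective (le_antisymm ((h i j).1 hij.le) ((h j i).1 hij.ge))

lemma reduce_eq_iff {m : ℕ} {w : Fin (m+1-1) → ℕ} {π : Equiv.Perm (Fin (m+1-1))} :
    reduce w = clusterWord (n := m+1) π ↔ Cmp w π := by
  constructor
  · intro h i j
    have hmono : ∀ a b : Fin (m+1-1), w a ≤ w b → (π a : ℕ) + 1 ≤ (π b : ℕ) + 1 := by
      intro a b hab
      have : reduce w a ≤ reduce w b := by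
        apply Finset.card_le_card
        apply Finset.monotone_filter_right
        intro v _ hv
        exact le_trans hv hab
      rwa [h] at this
    have hstrict : ∀ a b : Fin (m+1-1), w a < w b → (π a : ℕ) + 1 < (π b : ℕ) + 1 := by
      intro a b hab
      have : reduce w a < reduce w b := by
        apply Finset.card_lt_card
        constructor
        · apply Finset.monotone_filter_right; intro v _ hv; exact le_trans hv hab.le
        · intro hsub
          have hb : w b ∈ (Finset.univ.image w).filter (fun v => v ≤ w b) := by
            simp [Finset.mem_filter, Finset.mem_image]
          have := hsub hb
          simp [Finset.mem_filter] at this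
          omega
      rwa [h] at this
    constructor
    · intro hw
      have := hmono i j hw
      rw [Fin.le_def]; omega
    · intro hp
      by_contra hw
      have hlt : w j < w i := lt_of_not_ge hw
      have := hstrict j i hlt
      rw [Fin.le_def] at hp; omega
  · intro h
    funext i
    have hinj : Function.Injective w := h.inj
    have h1 : (Finset.univ.image w).filter (fun v => v ≤ w i)
        = (Finset.univ.filter (fun j => w j ≤ w i)).image w := by
      ext v
      simp only [Finset.mem_filter, Finset.mem_image, Finset.mem_univ, true_and]
      constructor
      · rintro ⟨⟨a, rfl⟩, hv⟩; exact ⟨a, hv, rfl⟩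
      · rintro ⟨a, ha, rfl⟩; exact ⟨⟨a, rfl⟩, ha⟩
    have h2 : (Finset.univ.filter (fun j => w j ≤ w i))
        = (Finset.univ.filter (fun j => π j ≤ π i)) := by
      ext a; simp [h a i]
    have h3 : (Finset.univ.filter (fun j => π j ≤ π i)).card
        = (Finset.Iic (π i)).card := by
      apply Finset.card_bij (fun a _ => π a)
      · intro a ha; simp at ha ⊢; exact ha
      · intro a _ b _ hab; exact π.injective hab
      · intro v hv
        refine ⟨π.symm v, ?_, π.apply_symm_apply v⟩
        simp only [Finset.mem_filter, Finset.mem_univ, true_and, Equiv.apply_symm_apply]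
        simpa using hv
    show ((Finset.univ.image w).filter (fun v => v ≤ w i)).card = (π i : ℕ) + 1
    rw [h1, Finset.card_image_of_injective _ hinj, h2, h3, Fin.card_Iic]

lemma cmp_unique {w : Fin m → ℕ} {π π' : Equiv.Perm (Fin m)}
    (h : Cmp w π) (h' : Cmp w π') : π = π' := by
  have key : ∀ a b : Fin m, π' (π.symm a) ≤ π' (π.symm b) ↔ a ≤ b := by
    intro a b
    rw [← (h' (π.symm a) (π.symm b)), h (π.symm a) (π.symm b)]
    simp
  have hsm : StrictMono (fun a => π' (π.symm a)) := by
    intro a b hab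
    rcases lt_or_ge (π' (π.symm a)) (π' (π.symm b)) with h1 | h1
    · exact h1
    · exact absurd ((key b a).1 h1) (not_le.2 hab)
  have hrange : Set.range (fun a => π' (π.symm a)) = Set.range (id : Fin m → Fin m) := by
    rw [Set.range_id]
    exact Set.range_eq_univ.mpr ((π'.surjective).comp (π.symm.surjective))
  haveI : WellFoundedLT (Fin m) := inferInstance
  have hfe := (StrictMono.range_inj hsm strictMono_id).1 hrange
  apply Equiv.ext
  intro i
  simpa using (congrFun hfe (π i)).symm

/-- standardization of a word -/
noncomputable def stdz (w : Fin m → ℕ) : Equiv.Perm (Fin m) := (Tuple.sort w)⁻¹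

lemma cmp_stdz {w : Fin m → ℕ} (hw : Function.Injective w) : Cmp w (stdz w) := by
  have hmono := Tuple.monotone_sort w
  have hinj : Function.Injective (w ∘ (Tuple.sort w)) := hw.comp (Tuple.sort w).injective
  have hsm : StrictMono (w ∘ (Tuple.sort w)) := hmono.strictMono_of_injective hinj
  intro i j
  have hi : w i = (w ∘ (Tuple.sort w)) ((Tuple.sort w)⁻¹ i) := by simp
  have hj : w j = (w ∘ (Tuple.sort w)) ((Tuple.sort w)⁻¹ j) := by simp
  rw [hi, hj, hsm.le_iff_le]
  rfl

end Aux

section Mk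
variable {m : ℕ}

/-- The permutation of `[n]` with prefix pattern `σ` and last letter `k+1`. -/
def mk (σ : Equiv.Perm (Fin m)) (k : Fin (m+1)) : Equiv.Perm (Fin (m+1)) :=
  (finSuccEquivLast.trans σ.optionCongr).trans (finSuccEquiv' k).symm

lemma mk_castSucc (σ : Equiv.Perm (Fin m)) (k : Fin (m+1)) (i : Fin m) :
    mk σ k (Fin.castSucc i) = k.succAbove (σ i) := by
  simp [mk]

lemma mk_last (σ : Equiv.Perm (Fin m)) (k : Fin (m+1)) :
    mk σ k (Fin.last m) = k := by
  simp [mk]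

lemma permWord_le (x : Equiv.Perm (Fin (m+1))) (a b : Fin (m+1)) :
    permWord x a ≤ permWord x b ↔ x a ≤ x b := by
  show (x a : ℕ) + 1 ≤ (x b : ℕ) + 1 ↔ _
  rw [Fin.le_def]
  omega

lemma cmp_first_iff (x : Equiv.Perm (Fin (m+1))) (σ : Equiv.Perm (Fin m)) :
    Cmp (firstw (permWord x)) σ ↔
      ∀ i j : Fin m, x (Fin.castSucc i) ≤ x (Fin.castSucc j) ↔ σ i ≤ σ j := by
  constructor
  · intro h i j
    have h2 : permWord x (Fin.castSucc i) ≤ permWord x (Fin.castSucc j) ↔ σ i ≤ σ j := h i j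
    rwa [permWord_le] at h2
  · intro h i j
    show permWord x (Fin.castSucc i) ≤ permWord x (Fin.castSucc j) ↔ σ i ≤ σ j
    rw [permWord_le]
    exact h i j

lemma cmp_mk_first (σ : Equiv.Perm (Fin m)) (k : Fin (m+1)) :
    Cmp (firstw (permWord (mk σ k))) σ := by
  rw [cmp_first_iff]
  intro i j
  rw [mk_castSucc, mk_castSucc]
  exact (Fin.strictMono_succAbove _).le_iff_le

lemma eq_mk_of_first (x : Equiv.Perm (Fin (m+1))) (σ : Equiv.Perm (Fin m))
    (h : Cmp (firstw (permWord x)) σ) : x = mk σ (x (Fin.last m)) := by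
  rw [cmp_first_iff] at h
  set k := x (Fin.last m) with hk
  have hsm : StrictMono (fun a : Fin m => x (Fin.castSucc (σ.symm a))) := by
    intro a b hab
    rcases lt_or_ge (x (Fin.castSucc (σ.symm a))) (x (Fin.castSucc (σ.symm b))) with h1 | h1
    · exact h1
    · have h2 := (h (σ.symm b) (σ.symm a)).1 h1
      simp only [Equiv.apply_symm_apply] at h2
      exact absurd h2 (not_le.2 hab)
  have hrange : Set.range (fun a : Fin m => x (Fin.castSucc (σ.symm a)))
      = Set.range k.succAbove := by
    rw [Fin.range_succAbove]
    ext v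
    simp only [Set.mem_range, Set.mem_compl_iff, Set.mem_singleton_iff]
    constructor
    · rintro ⟨a, rfl⟩
      intro hv
      exact absurd (x.injective hv) (Fin.castSucc_lt_last _).ne
    · intro hv
      have ht : x.symm v ≠ Fin.last m := by
        intro hh
        apply hv
        rw [← x.apply_symm_apply v, hh]
      obtain ⟨j, hj⟩ := Fin.exists_castSucc_eq.mpr ht
      refine ⟨σ j, ?_⟩
      simp only [Equiv.symm_apply_apply]
      rw [hj]
      exact x.apply_symm_apply v
  haveI : WellFoundedLT (Fin m) := inferInstance
  have hfe := (StrictMono.range_inj hsm (Fin.strictMono_succAbove k)).1 hrange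
  apply Equiv.ext
  intro t
  induction t using Fin.lastCases with
  | last => rw [mk_last]
  | cast i =>
      rw [mk_castSucc]
      have h3 := congrFun hfe (σ i)
      simpa using h3

lemma lastw_permWord (x : Equiv.Perm (Fin (m+1))) (i : Fin m) :
    lastw (permWord x) i = (x i.succ : ℕ) + 1 := rfl

lemma lastw_inj (x : Equiv.Perm (Fin (m+1))) :
    Function.Injective (lastw (permWord x)) := by
  intro i j hij
  have hij' : (x i.succ : ℕ) + 1 = (x j.succ : ℕ) + 1 := hij
  have h1 : x i.succ = x j.succ := Fin.ext (by omega)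
  have h2 := congrArg Fin.val (x.injective h1)
  simp only [Fin.val_succ] at h2
  exact Fin.ext (by omega)

/-- The target cluster of the `k`-th edge out of `σ`. -/
noncomputable def Tm (σ : Equiv.Perm (Fin m)) (k : Fin (m+1)) : Equiv.Perm (Fin m) :=
  stdz (lastw (permWord (mk σ k)))

lemma isEdge_iff (x : Equiv.Perm (Fin (m+1))) (σ τ : Equiv.Perm (Fin m)) :
    isEdge (n := m+1) x σ τ ↔ ∃ k, x = mk σ k ∧ Tm σ k = τ := by
  unfold isEdge
  rw [reduce_eq_iff, reduce_eq_iff]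
  constructor
  · rintro ⟨h1, h2⟩
    have hx := eq_mk_of_first x σ h1
    refine ⟨x (Fin.last m), hx, ?_⟩
    have h3 : τ = stdz (lastw (permWord x)) := cmp_unique h2 (cmp_stdz (lastw_inj x))
    rw [h3, Tm, ← hx]
  · rintro ⟨k, rfl, rfl⟩
    exact ⟨cmp_mk_first σ k, cmp_stdz (lastw_inj _)⟩

end Mk

section Fibers
variable {m : ℕ}

lemma succAbove_val (k : Fin (m+1)) (a : Fin m) :
    (k.succAbove a : ℕ) = if (a : ℕ) < (k : ℕ) then (a : ℕ) else (a : ℕ) + 1 := by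
  rcases lt_or_ge (Fin.castSucc a) k with h | h
  · have h' : (a : ℕ) < (k : ℕ) := by simpa [Fin.lt_def] using h
    rw [Fin.succAbove_of_castSucc_lt _ _ h, Fin.coe_castSucc, if_pos h']
  · have h' : (k : ℕ) ≤ (a : ℕ) := by simpa [Fin.le_def] using h
    rw [Fin.succAbove_of_le_castSucc _ _ h, Fin.val_succ, if_neg (by omega)]

lemma le_succAbove_iff (k : Fin (m+1)) (a : Fin m) :
    k ≤ k.succAbove a ↔ (k : ℕ) ≤ (a : ℕ) := by
  rw [Fin.le_def, succAbove_val]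
  split <;> omega

lemma succAbove_le_iff (k : Fin (m+1)) (a : Fin m) :
    k.succAbove a ≤ k ↔ (a : ℕ) < (k : ℕ) := by
  rw [Fin.le_def, succAbove_val]
  split <;> omega

lemma stdz_eq_stdz {w w' : Fin m → ℕ} (hw : Function.Injective w)
    (hw' : Function.Injective w') :
    stdz w = stdz w' ↔ ∀ i j, (w i ≤ w j ↔ w' i ≤ w' j) := by
  constructor
  · intro h i j
    rw [cmp_stdz hw i j, cmp_stdz hw' i j, h]
  · intro h
    have hc : Cmp w' (stdz w) := fun i j => (h i j).symm.trans (cmp_stdz hw i j)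
    exact cmp_unique hc (cmp_stdz hw')

lemma succ_cases (i : Fin m) :
    i.succ = Fin.last m ∨ ∃ j : Fin m, 0 < (j : ℕ) ∧ i.succ = Fin.castSucc j := by
  rcases eq_or_lt_of_le (Nat.succ_le_of_lt i.isLt) with h | h
  · left; exact Fin.ext (by simp [Fin.val_succ]; omega)
  · right
    exact ⟨⟨i.val + 1, h⟩, Nat.succ_pos _, Fin.ext rfl⟩

lemma Tm_eq_iff (hm : 0 < m) (σ : Equiv.Perm (Fin m)) (k k' : Fin (m+1)) :
    Tm σ k = Tm σ k' ↔ k = k' ∨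
      ((k : ℕ) = (σ ⟨0, hm⟩ : ℕ) ∧ (k' : ℕ) = (k : ℕ) + 1) ∨
      ((k' : ℕ) = (σ ⟨0, hm⟩ : ℕ) ∧ (k : ℕ) = (k' : ℕ) + 1) := by
  rw [Tm, Tm, stdz_eq_stdz (lastw_inj _) (lastw_inj _)]
  have hcmp : ∀ (K : Fin (m+1)) (i j : Fin m),
      (lastw (permWord (mk σ K)) i ≤ lastw (permWord (mk σ K)) j ↔
        mk σ K i.succ ≤ mk σ K j.succ) := by
    intro K i j
    show (mk σ K i.succ : ℕ) + 1 ≤ (mk σ K j.succ : ℕ) + 1 ↔ _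
    rw [Fin.le_def]
    omega
  set z : Fin m := ⟨0, hm⟩ with hz
  constructor
  · intro h
    rcases eq_or_ne k k' with hkk | hkk
    · exact Or.inl hkk
    right
    -- the basic comparison fact transfers
    have key : ∀ j : Fin m, 0 < (j : ℕ) → ((k : ℕ) ≤ (σ j : ℕ) ↔ (k' : ℕ) ≤ (σ j : ℕ)) := by
      intro j hj
      have hjlt : (j : ℕ) - 1 < m := by omega
      set i : Fin m := ⟨(j : ℕ) - 1, hjlt⟩ with hi
      have hisucc : i.succ = Fin.castSucc j := Fin.ext (by simp [hi]; omega)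
      set ilast : Fin m := ⟨m - 1, by omega⟩ with hil
      have hlsucc : ilast.succ = Fin.last m := Fin.ext (by simp [hil]; omega)
      have h1 := (hcmp k ilast i).symm.trans ((h ilast i).trans (hcmp k' ilast i))
      rw [hisucc, hlsucc, mk_last, mk_last, mk_castSucc, mk_castSucc] at h1
      rw [le_succAbove_iff, le_succAbove_iff] at h1
      exact h1
    -- values strictly between are impossible except σ z
    have hval : ∀ v : ℕ, v < m →
        (min (k : ℕ) (k' : ℕ) ≤ v ∧ v < max (k : ℕ) (k' : ℕ)) → v = (σ z : ℕ) := by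
      intro v hv hbet
      by_contra hvz
      set j : Fin m := σ.symm ⟨v, hv⟩ with hj
      have hσj : σ j = ⟨v, hv⟩ := σ.apply_symm_apply _
      have hj0 : 0 < (j : ℕ) := by
        rcases Nat.eq_zero_or_pos (j : ℕ) with h0 | h0
        · exfalso
          apply hvz
          have : j = z := Fin.ext (by simpa using h0)
          rw [← this, hσj]
        · exact h0
      have := key j hj0
      rw [hσj] at this
      simp only at this
      omega
    have hne : (k : ℕ) ≠ (k' : ℕ) := fun hcon => hkk (Fin.ext hcon)
    rcases lt_or_gt_of_ne hne with hlt | hlt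
    · left
      have hkm : (k : ℕ) < m := by
        have := k'.isLt; omega
      have h1 := hval (k : ℕ) hkm (by omega)
      constructor
      · omega
      · by_contra hcon
        have hk1m : (k : ℕ) + 1 < m := by
          have := k'.isLt; omega
        have h2 := hval ((k : ℕ) + 1) hk1m (by omega)
        omega
    · right
      have hkm : (k' : ℕ) < m := by
        have := k.isLt; omega
      have h1 := hval (k' : ℕ) hkm (by omega)
      constructor
      · omega
      · by_contra hcon
        have hk1m : (k' : ℕ) + 1 < m := by
          have := k.isLt; omega
        have h2 := hval ((k' : ℕ) + 1) hk1m (by omega)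
        omega
  · intro h
    rcases h with rfl | h
    · intro i j; rfl
    -- symmetric cases: prove a helper
    have main : ∀ K K' : Fin (m+1), (K : ℕ) = (σ z : ℕ) → (K' : ℕ) = (K : ℕ) + 1 →
        ∀ i j : Fin m, (lastw (permWord (mk σ K)) i ≤ lastw (permWord (mk σ K)) j ↔
          lastw (permWord (mk σ K')) i ≤ lastw (permWord (mk σ K')) j) := by
      intro K K' hK hK' i j
      rw [hcmp K i j, hcmp K' i j]
      have hσne : ∀ a : Fin m, 0 < (a : ℕ) → (σ a : ℕ) ≠ (K : ℕ) := by
        intro a ha hcon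
        have : σ a = σ z := Fin.ext (by rw [hcon, hK])
        have : a = z := σ.injective this
        rw [this] at ha
        simp [hz] at ha
      rcases succ_cases i with hi | ⟨ji, hji0, hji⟩ <;>
        rcases succ_cases j with hj | ⟨jj, hjj0, hjj⟩
      · rw [hi, hj]
        simp
      · rw [hi, hjj, mk_last, mk_last, mk_castSucc, mk_castSucc,
          le_succAbove_iff, le_succAbove_iff]
        have := hσne jj hjj0
        omega
      · rw [hj, hji, mk_last, mk_last, mk_castSucc, mk_castSucc,
          succAbove_le_iff, succAbove_le_iff]
        have := hσne ji hji0
        omega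
      · rw [hji, hjj, mk_castSucc, mk_castSucc, mk_castSucc, mk_castSucc]
        rw [(Fin.strictMono_succAbove K).le_iff_le, (Fin.strictMono_succAbove K').le_iff_le]
    rcases h with ⟨h1, h2⟩ | ⟨h1, h2⟩
    · exact main k k' h1 h2
    · intro i j
      exact (main k' k h1 h2 i j).symm

end Fibers

section Count
variable {m : ℕ}

lemma card_edges (σ τ : Equiv.Perm (Fin m)) :
    Nat.card {x : Equiv.Perm (Fin (m+1)) // isEdge (n := m+1) x σ τ}
      = (Finset.univ.filter (fun k : Fin (m+1) => Tm σ k = τ)).card := by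
  have e : {x : Equiv.Perm (Fin (m+1)) // isEdge (n := m+1) x σ τ} ≃
      {k : Fin (m+1) // Tm σ k = τ} := by
    refine ⟨fun x => ⟨x.1 (Fin.last m), ?_⟩,
      fun k => ⟨mk σ k.1, (isEdge_iff _ σ τ).2 ⟨k.1, rfl, k.2⟩⟩, ?_, ?_⟩
    · obtain ⟨k, hk1, hk2⟩ := (isEdge_iff x.1 σ τ).1 x.2
      rw [hk1, mk_last]
      exact hk2
    · intro x
      obtain ⟨k, hk1, hk2⟩ := (isEdge_iff x.1 σ τ).1 x.2
      apply Subtype.ext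
      show mk σ (x.1 (Fin.last m)) = x.1
      conv_lhs => rw [hk1, mk_last]
      exact hk1.symm
    · intro k
      apply Subtype.ext
      show (mk σ k.1) (Fin.last m) = k.1
      exact mk_last σ k.1
  rw [Nat.card_congr e, Nat.card_eq_fintype_card, Fintype.card_subtype]

end Count


/-- For each cluster `σ` there is a unique cluster `τ` joined to it by exactly two
parallel edges, and no cluster is joined from `σ` by three or more parallel edges. -/
theorem unique_double_edge_out (n : ℕ) (hn : 3 ≤ n) (σ : Equiv.Perm (Fin (n - 1))) :
    (∃! τ : Equiv.Perm (Fin (n - 1)),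
      Nat.card {x : Equiv.Perm (Fin n) // isEdge x σ τ} = 2) ∧
    (∀ τ : Equiv.Perm (Fin (n - 1)),
      Nat.card {x : Equiv.Perm (Fin n) // isEdge x σ τ} ≤ 2) := by
  obtain ⟨m, rfl⟩ : ∃ m, n = m + 1 := ⟨n - 1, by omega⟩
  have hm : 0 < m := by omega
  have hcard : ∀ τ : Equiv.Perm (Fin m),
      Nat.card {x : Equiv.Perm (Fin (m+1)) // isEdge (n := m+1) x σ τ}
        = (Finset.univ.filter (fun k : Fin (m+1) => Tm σ k = τ)).card :=
    fun τ => card_edges σ τ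
  have ha0 : (σ (⟨0, hm⟩ : Fin m) : ℕ) < m := (σ (⟨0, hm⟩ : Fin m)).isLt
  set a0 : ℕ := (σ (⟨0, hm⟩ : Fin m) : ℕ) with ha0def
  set k₀ : Fin (m+1) := ⟨a0, by omega⟩ with hk₀
  set k₁ : Fin (m+1) := ⟨a0 + 1, by omega⟩ with hk₁
  have hk₀v : (k₀ : ℕ) = a0 := rfl
  have hk₁v : (k₁ : ℕ) = a0 + 1 := rfl
  have hTm : ∀ k k' : Fin (m+1), Tm σ k = Tm σ k' ↔ k = k' ∨
      ((k : ℕ) = a0 ∧ (k' : ℕ) = (k : ℕ) + 1) ∨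
      ((k' : ℕ) = a0 ∧ (k : ℕ) = (k' : ℕ) + 1) :=
    fun k k' => Tm_eq_iff hm σ k k'
  have hfilter : Finset.univ.filter (fun k : Fin (m+1) => Tm σ k = Tm σ k₀) = {k₀, k₁} := by
    ext k
    simp only [Finset.mem_filter, Finset.mem_univ, true_and, Finset.mem_insert,
      Finset.mem_singleton]
    constructor
    · intro h
      rcases (hTm k k₀).1 h with rfl | ⟨h1, h2⟩ | ⟨h1, h2⟩
      · exact Or.inl rfl
      · exfalso; omega
      · exact Or.inr (Fin.ext (by omega))
    · rintro (rfl | rfl)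
      · rfl
      · exact (hTm k₁ k₀).2 (Or.inr (Or.inr ⟨hk₀v, by omega⟩))
  have hk01 : k₀ ≠ k₁ := fun h => by
    have := congrArg Fin.val h; omega
  have hcard2 : (Finset.univ.filter (fun k : Fin (m+1) => Tm σ k = Tm σ k₀)).card = 2 := by
    rw [hfilter, Finset.card_insert_of_notMem (by simpa using hk01), Finset.card_singleton]
  constructor
  · refine ⟨Tm σ k₀, ?_, ?_⟩
    · exact (hcard (Tm σ k₀)).trans hcard2
    · intro τ hτ
      rw [hcard τ] at hτ
      have h1 : 1 < (Finset.univ.filter (fun k : Fin (m+1) => Tm σ k = τ)).card := by omega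
      obtain ⟨k, hk, k', hk', hne⟩ := Finset.one_lt_card.1 h1
      simp only [Finset.mem_filter, Finset.mem_univ, true_and] at hk hk'
      have heq : Tm σ k = Tm σ k' := hk.trans hk'.symm
      rcases (hTm k k').1 heq with rfl | ⟨h1', h2'⟩ | ⟨h1', h2'⟩
      · exact absurd rfl hne
      · have : k = k₀ := Fin.ext (by omega)
        rw [← hk, this]
      · have : k' = k₀ := Fin.ext (by omega)
        rw [← hk', this]
  · intro τ
    rw [hcard τ]
    by_contra hcon
    have h2 : 2 < (Finset.univ.filter (fun k : Fin (m+1) => Tm σ k = τ)).card := by omega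
    obtain ⟨x, y, zz, hx, hy, hz, hxy, hxz, hyz⟩ := Finset.two_lt_card_iff.1 h2
    simp only [Finset.mem_filter, Finset.mem_univ, true_and] at hx hy hz
    have pair : ∀ u v : Fin (m+1), u ≠ v → Tm σ u = Tm σ v →
        ((u : ℕ) = a0 ∧ (v : ℕ) = a0 + 1) ∨ ((v : ℕ) = a0 ∧ (u : ℕ) = a0 + 1) := by
      intro u v huv he
      rcases (hTm u v).1 he with rfl | ⟨h1', h2'⟩ | ⟨h1', h2'⟩
      · exact absurd rfl huv
      · exact Or.inl ⟨h1', by omega⟩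
      · exact Or.inr ⟨h1', by omega⟩
    have p1 := pair x y hxy (hx.trans hy.symm)
    have p2 := pair x zz hxz (hx.trans hz.symm)
    have p3 := pair y zz hyz (hy.trans hz.symm)
    have hvxy : (x : ℕ) ≠ (y : ℕ) := fun h => hxy (Fin.ext h)
    have hvxz : (x : ℕ) ≠ (zz : ℕ) := fun h => hxz (Fin.ext h)
    have hvyz : (y : ℕ) ≠ (zz : ℕ) := fun h => hyz (Fin.ext h)
    omega
end

section
/- For n ≥ 4, no permutation in the set 𝒫* contains three consecutive entries order-isomorphic to 213 or to 231. That is, for every π ∈ 𝒫* and every index i with 1 ≤ i ≤ n−2, the triple (π_i, π_{i+1}, π_{i+2}) does not satisfy (π_{i+1} < π_i < π_{i+2}) and does not satisfy (π_{i+2} < π_i < π_{i+1}). -/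
/-- The word `(n, n-1, …, k, 1, 2, …, k-1)`. -/
def wordA (n k : ℕ) : Fin n → ℕ :=
  fun i => if i.val ≤ n - k then n - i.val else i.val - (n - k)

/-- The identity word `(1, 2, …, n)`. -/
def wordId (n : ℕ) : Fin n → ℕ := fun i => i.val + 1

/-- The word `(1, 2, …, k, n, k+1, n-1, n-2, …, k+2)`. -/
def wordB (n k : ℕ) : Fin n → ℕ :=
  fun i => if i.val < k then i.val + 1 else if i.val = k then n
    else if i.val = k + 1 then k + 1 else n + k + 1 - i.val

/-- The word `(n, 1, n-1, n-2, …, 2)`. -/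
def wordC1 (n : ℕ) : Fin n → ℕ :=
  fun i => if i.val = 0 then n else if i.val = 1 then 1 else n + 1 - i.val

/-- The word `(1, n, n-1, …, 2)`. -/
def wordC2 (n : ℕ) : Fin n → ℕ :=
  fun i => if i.val = 0 then 1 else n + 1 - i.val

/-- The word `(n-1, 1, 2, …, n-2, n)`. -/
def wordE1 (n : ℕ) : Fin n → ℕ :=
  fun i => if i.val = 0 then n - 1 else if i.val = n - 1 then n else i.val

/-- The word `(2, n, n-1, …, 4, 3, 1)`. -/
def wordE2 (n : ℕ) : Fin n → ℕ :=
  fun i => if i.val = 0 then 2 else if i.val = n - 1 then 1 else n + 1 - i.val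

/-- The set 𝒫 of `2n` permutations of `[n]` used for the gluing. -/
def Pset (n : ℕ) : Set (Fin n → ℕ) :=
  {w | (∃ k, 1 ≤ k ∧ k ≤ n ∧ w = wordA n k) ∨ w = wordId n ∨
    (∃ k, 1 ≤ k ∧ k ≤ n - 2 ∧ w = wordB n k) ∨ w = wordC1 n ∨ w = wordC2 n}

/-- The set 𝒫* = 𝒫 together with the two extra twin permutations. -/
def PstarSet (n : ℕ) : Set (Fin n → ℕ) := Pset n ∪ {wordE1 n, wordE2 n}

/-- For `n ≥ 4`, no permutation in 𝒫* contains three consecutive entries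
order-isomorphic to 213 or to 231. -/
theorem Pstar_avoids_213_231 (n : ℕ) (hn : 4 ≤ n) (π : Fin n → ℕ)
    (hπ : π ∈ PstarSet n) (i : ℕ) (hi : i + 2 < n) :
    ¬(π ⟨i + 1, by omega⟩ < π ⟨i, by omega⟩ ∧ π ⟨i, by omega⟩ < π ⟨i + 2, hi⟩) ∧
    ¬(π ⟨i + 2, hi⟩ < π ⟨i, by omega⟩ ∧ π ⟨i, by omega⟩ < π ⟨i + 1, by omega⟩) := by
  obtain (⟨k,hk1,hk2,rfl⟩|rfl|⟨k,hk1,hk2,rfl⟩|rfl|rfl)|(rfl|rfl) := hπ <;>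
    refine ⟨?_, ?_⟩ <;> rintro ⟨h1, h2⟩ <;>
    simp only [wordA, wordId, wordB, wordC1, wordC2, wordE1, wordE2] at h1 h2 <;>
    first | omega | (split_ifs at h1 h2 <;> omega)
end

section
/- Let T = (e_1, …, e_ℓ) be a trail in a compressed cluster graph for n-permutations with labels L(e_i). Then there exists a word w = w_1 ⋯ w_{ℓ+n−1} over the natural numbers such that for every i with 1 ≤ i ≤ ℓ, reduce(w_i w_{i+1} ⋯ w_{i+n−1}) equals L(e_i) (interpreting the label of a compressed edge as the length-n word x_1⋯x_{n−1}x_1 with x_1 = x_n). -/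
/-- generalized reduce over any linear order -/
def reduceG {m : ℕ} {α : Type*} [LinearOrder α] (w : Fin m → α) : Fin m → ℕ :=
  fun i => ((Finset.univ.image w).filter (fun v => v ≤ w i)).card

lemma reduce_eq_reduceG {m : ℕ} (w : Fin m → ℕ) : reduce w = reduceG w := rfl

lemma reduceG_le_iff {m : ℕ} {α : Type*} [LinearOrder α] (w : Fin m → α) (i j : Fin m) :
    reduceG w i ≤ reduceG w j ↔ w i ≤ w j := by
  constructor
  · intro h
    by_contra hc
    push_neg at hc
    have hsub : ((Finset.univ.image w).filter (fun v => v ≤ w j)) ⊂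
        ((Finset.univ.image w).filter (fun v => v ≤ w i)) := by
      constructor
      · intro x hx
        simp only [Finset.mem_filter] at hx ⊢
        exact ⟨hx.1, le_trans hx.2 hc.le⟩
      · intro hsub
        have : w i ∈ (Finset.univ.image w).filter (fun v => v ≤ w j) := by
          apply hsub
          simp only [Finset.mem_filter]
          exact ⟨Finset.mem_image_of_mem w (Finset.mem_univ i), le_refl _⟩
        simp only [Finset.mem_filter] at this
        exact absurd this.2 (not_le.mpr hc)
    have := Finset.card_lt_card hsub
    simp only [reduceG] at h
    omega
  · intro h
    apply Finset.card_le_card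
    intro x hx
    simp only [Finset.mem_filter] at hx ⊢
    exact ⟨hx.1, le_trans hx.2 h⟩

lemma card_image_ker {ι α β : Type*} [DecidableEq α] [DecidableEq β]
    (S : Finset ι) (f : ι → α) (g : ι → β)
    (h : ∀ a ∈ S, ∀ b ∈ S, f a = f b ↔ g a = g b) :
    (S.image f).card = (S.image g).card := by
  classical
  apply Finset.card_bij (fun y hy => g (Finset.mem_image.mp hy).choose)
  · intro y hy
    have hs := (Finset.mem_image.mp hy).choose_spec
    exact Finset.mem_image_of_mem g hs.1
  · intro y1 hy1 y2 hy2 he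
    have h1 := (Finset.mem_image.mp hy1).choose_spec
    have h2 := (Finset.mem_image.mp hy2).choose_spec
    rw [← h1.2, ← h2.2]
    exact (h _ h1.1 _ h2.1).mpr he
  · intro z hz
    obtain ⟨j, hj, rfl⟩ := Finset.mem_image.mp hz
    refine ⟨f j, Finset.mem_image_of_mem f hj, ?_⟩
    have h1 := (Finset.mem_image.mp (Finset.mem_image_of_mem f hj)).choose_spec
    exact (h _ h1.1 _ hj).mp h1.2

lemma reduceG_eq_of_iff {m : ℕ} {α β : Type*} [LinearOrder α] [LinearOrder β]
    (u : Fin m → α) (v : Fin m → β) (h : ∀ a b, u a ≤ u b ↔ v a ≤ v b) :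
    reduceG u = reduceG v := by
  classical
  funext i
  have hu : (Finset.univ.image u).filter (fun x => x ≤ u i)
      = (Finset.univ.filter (fun j => u j ≤ u i)).image u := by
    ext x
    simp only [Finset.mem_filter, Finset.mem_image, Finset.mem_univ, true_and]
    constructor
    · rintro ⟨⟨j, rfl⟩, hx⟩; exact ⟨j, hx, rfl⟩
    · rintro ⟨j, hj, rfl⟩; exact ⟨⟨j, rfl⟩, hj⟩
  have hv : (Finset.univ.image v).filter (fun x => x ≤ v i)
      = (Finset.univ.filter (fun j => v j ≤ v i)).image v := by
    ext x
    simp only [Finset.mem_filter, Finset.mem_image, Finset.mem_univ, true_and]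
    constructor
    · rintro ⟨⟨j, rfl⟩, hx⟩; exact ⟨j, hx, rfl⟩
    · rintro ⟨j, hj, rfl⟩; exact ⟨⟨j, rfl⟩, hj⟩
  have hfs : (Finset.univ.filter (fun j => u j ≤ u i))
      = (Finset.univ.filter (fun j => v j ≤ v i)) := by
    ext j; simp [h j i]
  simp only [reduceG]
  rw [hu, hv, hfs]
  apply card_image_ker
  intro a _ b _
  constructor
  · intro he; exact le_antisymm ((h a b).mp he.le) ((h b a).mp he.ge)
  · intro he; exact le_antisymm ((h a b).mpr he.le) ((h b a).mpr he.ge)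

/-- Crux: find a rational strictly above all `u a` with `v a < t` and
strictly below all `u b` with `t < v b`. -/
lemma exists_between_q {n : ℕ} (v : Fin n → ℕ) (t : ℕ) (u : Fin n → ℚ)
    (hab : ∀ a b : Fin n, a.val < n - 1 → b.val < n - 1 → v a < t → t < v b → u a < u b) :
    ∃ q : ℚ, (∀ a : Fin n, a.val < n - 1 → v a < t → u a < q) ∧
      (∀ b : Fin n, b.val < n - 1 → t < v b → q < u b) := by
  classical
  set A : Finset (Fin n) := Finset.univ.filter (fun a => a.val < n - 1 ∧ v a < t) with hA
  set B : Finset (Fin n) := Finset.univ.filter (fun b => b.val < n - 1 ∧ t < v b) with hB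
  by_cases hAne : A.Nonempty
  · by_cases hBne : B.Nonempty
    · have hAine : (A.image u).Nonempty := hAne.image u
      have hBine : (B.image u).Nonempty := hBne.image u
      set M := (A.image u).max' hAine with hM
      set m := (B.image u).min' hBine with hm
      have hMm : M < m := by
        obtain ⟨a0, ha0, hMa⟩ := Finset.mem_image.mp ((A.image u).max'_mem hAine)
        obtain ⟨b0, hb0, hmb⟩ := Finset.mem_image.mp ((B.image u).min'_mem hBine)
        simp only [hA, hB, Finset.mem_filter, Finset.mem_univ, true_and] at ha0 hb0
        rw [hM, hm, ← hMa, ← hmb]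
        exact hab a0 b0 ha0.1 hb0.1 ha0.2 hb0.2
      refine ⟨(M + m) / 2, ?_, ?_⟩
      · intro a ha hva
        have : u a ≤ M := Finset.le_max' _ _ (Finset.mem_image_of_mem u (by simp [hA, ha, hva]))
        linarith
      · intro b hb hvb
        have : m ≤ u b := Finset.min'_le _ _ (Finset.mem_image_of_mem u (by simp [hB, hb, hvb]))
        linarith
    · refine ⟨(A.image u).max' (hAne.image u) + 1, ?_, ?_⟩
      · intro a ha hva
        have : u a ≤ (A.image u).max' (hAne.image u) :=
          Finset.le_max' _ _ (Finset.mem_image_of_mem u (by simp [hA, ha, hva]))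
        linarith
      · intro b hb hvb
        exact absurd ⟨b, by simp [hB, hb, hvb]⟩ hBne
  · by_cases hBne : B.Nonempty
    · refine ⟨(B.image u).min' (hBne.image u) - 1, ?_, ?_⟩
      · intro a ha hva
        exact absurd ⟨a, by simp [hA, ha, hva]⟩ hAne
      · intro b hb hvb
        have : (B.image u).min' (hBne.image u) ≤ u b :=
          Finset.min'_le _ _ (Finset.mem_image_of_mem u (by simp [hB, hb, hvb]))
        linarith
    · exact ⟨0, fun a ha hva => absurd ⟨a, by simp [hA, ha, hva]⟩ hAne,
        fun b hb hvb => absurd ⟨b, by simp [hB, hb, hvb]⟩ hBne⟩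

/-- Crux extension lemma. -/
lemma extend_exists_q {n : ℕ} (hn : 2 ≤ n) (v : Fin n → ℕ) (u : Fin n → ℚ)
    (hshape : Function.Injective v ∨
      (v ⟨0, by omega⟩ = v ⟨n - 1, by omega⟩ ∧
        ∀ a b : Fin n, a.val < n - 1 → b.val < n - 1 → v a = v b → a = b))
    (hcomp : ∀ a b : Fin n, a.val < n - 1 → b.val < n - 1 → (u a ≤ u b ↔ v a ≤ v b)) :
    ∃ q : ℚ, ∀ a b : Fin n,
      (if a.val < n - 1 then u a else q) ≤ (if b.val < n - 1 then u b else q) ↔ v a ≤ v b := by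
  have hlast : ∀ a : Fin n, ¬ a.val < n - 1 → a = ⟨n - 1, by omega⟩ := by
    intro a ha; apply Fin.ext; have := a.isLt; simp; omega
  rcases hshape with hinj | ⟨hc, _⟩
  · -- injective case
    set t := v ⟨n - 1, by omega⟩ with ht
    have hne : ∀ a : Fin n, a.val < n - 1 → v a ≠ t := by
      intro a ha he
      have := hinj he
      subst this
      simp at ha
    have hab : ∀ a b : Fin n, a.val < n - 1 → b.val < n - 1 → v a < t → t < v b → u a < u b := by
      intro a b ha hb hva hvb
      have : ¬ (v b ≤ v a) := by omega
      have := (not_iff_not.mpr (hcomp b a hb ha)).mpr this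
      linarith [not_le.mp this]
    obtain ⟨q, hq1, hq2⟩ := exists_between_q v t u hab
    refine ⟨q, ?_⟩
    intro a b
    by_cases ha : a.val < n - 1 <;> by_cases hb : b.val < n - 1 <;>
      simp only [ha, hb, if_true, if_false]
    · exact hcomp a b ha hb
    · rw [hlast b hb]
      rcases lt_or_gt_of_ne (hne a ha) with h | h
      · constructor
        · intro _; omega
        · intro _; exact (hq1 a ha h).le
      · constructor
        · intro hq; exact absurd hq (not_le.mpr (hq2 a ha h))
        · intro hv; omega
    · rw [hlast a ha]
      rcases lt_or_gt_of_ne (hne b hb) with h | h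
      · constructor
        · intro hq; exact absurd hq (not_le.mpr (hq1 b hb h))
        · intro hv; omega
      · constructor
        · intro _; omega
        · intro _; exact (hq2 b hb h).le
    · rw [hlast a ha, hlast b hb]; simp
  · -- compressed case
    have h0 : (0 : ℕ) < n - 1 := by omega
    refine ⟨u ⟨0, by omega⟩, ?_⟩
    intro a b
    by_cases ha : a.val < n - 1 <;> by_cases hb : b.val < n - 1 <;>
      simp only [ha, hb, if_true, if_false]
    · exact hcomp a b ha hb
    · rw [hlast b hb, ← hc]
      exact hcomp a ⟨0, by omega⟩ ha h0
    · rw [hlast a ha, ← hc]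
      exact hcomp ⟨0, by omega⟩ b h0 hb
    · rw [hlast a ha, hlast b hb]; simp
set_option maxHeartbeats 4000000 in
/-- Inductive construction of a rational word realizing the first `k` windows. -/
lemma build_word {n ℓ : ℕ} (hn : 2 ≤ n) (L' : ℕ → Fin n → ℕ)
    (hshape' : ∀ i < ℓ, Function.Injective (L' i) ∨
      (L' i ⟨0, by omega⟩ = L' i ⟨n - 1, by omega⟩ ∧
        ∀ a b : Fin n, a.val < n - 1 → b.val < n - 1 → L' i a = L' i b → a = b))
    (hcons' : ∀ i : ℕ, 1 ≤ i → i < ℓ → ∀ a b : Fin (n - 1),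
      (lastw (L' (i - 1)) a ≤ lastw (L' (i - 1)) b ↔ firstw (L' i) a ≤ firstw (L' i) b)) :
    ∀ k, k ≤ ℓ → ∃ W : ℕ → ℚ, ∀ i < k, ∀ a b : Fin n,
      (W (i + a.val) ≤ W (i + b.val) ↔ L' i a ≤ L' i b) := by
  intro k
  induction k with
  | zero => exact fun _ => ⟨fun _ => 0, fun i hi => absurd hi (by omega)⟩
  | succ k ih =>
    intro hkl
    rcases Nat.eq_zero_or_pos k with rfl | hk1
    · -- base: k + 1 = 1
      refine ⟨fun m => if h : m < n then (L' 0 ⟨m, h⟩ : ℚ) else 0, ?_⟩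
      intro i hi a b
      interval_cases i
      have ha : (0 : ℕ) + a.val < n := by have := a.isLt; omega
      have hb : (0 : ℕ) + b.val < n := by have := b.isLt; omega
      simp only [dif_pos ha, dif_pos hb, Nat.cast_le]
      have : (⟨0 + a.val, ha⟩ : Fin n) = a := by apply Fin.ext; simp
      rw [this]
      have : (⟨0 + b.val, hb⟩ : Fin n) = b := by apply Fin.ext; simp
      rw [this]
    · obtain ⟨W, hW⟩ := ih (by omega)
      have hkℓ : k < ℓ := by omega
      -- comparisons of the overlap part
      have hcomp : ∀ a b : Fin n, a.val < n - 1 → b.val < n - 1 →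
          (W (k + a.val) ≤ W (k + b.val) ↔ L' k a ≤ L' k b) := by
        intro a b ha hb
        have ha' : a.val + 1 < n := by omega
        have hb' : b.val + 1 < n := by omega
        have h1 := hW (k - 1) (by omega) ⟨a.val + 1, ha'⟩ ⟨b.val + 1, hb'⟩
        simp only [Fin.val_mk] at h1
        rw [show k - 1 + (a.val + 1) = k + a.val by omega,
            show k - 1 + (b.val + 1) = k + b.val by omega] at h1
        have h2 := hcons' k (by omega) (by omega) ⟨a.val, by omega⟩ ⟨b.val, by omega⟩
        have hla : lastw (L' (k - 1)) ⟨a.val, by omega⟩ = L' (k - 1) ⟨a.val + 1, ha'⟩ := by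
          show L' (k - 1) _ = L' (k - 1) _
          congr 1
        have hlb : lastw (L' (k - 1)) ⟨b.val, by omega⟩ = L' (k - 1) ⟨b.val + 1, hb'⟩ := by
          show L' (k - 1) _ = L' (k - 1) _
          congr 1
        have hfa : firstw (L' k) ⟨a.val, by omega⟩ = L' k a := by
          show L' k _ = L' k a
          exact congrArg (L' k) (Fin.ext rfl)
        have hfb : firstw (L' k) ⟨b.val, by omega⟩ = L' k b := by
          show L' k _ = L' k b
          exact congrArg (L' k) (Fin.ext rfl)
        rw [hla, hlb, hfa, hfb] at h2
        exact h1.trans h2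
      obtain ⟨q, hq⟩ := extend_exists_q hn (L' k) (fun c : Fin n => W (k + c.val))
        (hshape' k hkℓ) hcomp
      refine ⟨fun m => if m = k + n - 1 then q else W m, ?_⟩
      intro i hi a b
      rcases Nat.lt_or_ge i k with hik | hik
      · have ea : ¬ (i + a.val = k + n - 1) := by have := a.isLt; omega
        have eb : ¬ (i + b.val = k + n - 1) := by have := b.isLt; omega
        simp only [if_neg ea, if_neg eb]
        exact hW i hik a b
      · have hik' : i = k := by omega
        subst hik'
        have ea : ∀ c : Fin n, (if i + c.val = i + n - 1 then q else W (i + c.val)) =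
            (if c.val < n - 1 then (fun d : Fin n => W (i + d.val)) c else q) := by
          intro c
          by_cases hc : c.val < n - 1
          · rw [if_neg (by omega), if_pos hc]
          · have : c.val = n - 1 := by have := c.isLt; omega
            rw [if_pos (by omega), if_neg hc]
        simp only [ea]
        exact hq a b

/-- Lemma 4: given a trail `e₁, …, e_ℓ` in a compressed cluster graph for
`n`-permutations, with labels `L(eᵢ)` (reduced words of length `n` that are either
permutations of `[n]` or compressed labels, whose first and last letters agree and are
otherwise injective), there is a word `w` of length `ℓ + n - 1` whose `i`-th window of
length `n` reduces to `L(eᵢ)` for every `i`. -/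
theorem trail_gives_word (n ℓ : ℕ) (hn : 2 ≤ n) (hl : 1 ≤ ℓ)
    (L : Fin ℓ → Fin n → ℕ)
    (htrail : Function.Injective L)
    (hred : ∀ i, reduce (L i) = L i)
    (hshape : ∀ i, Function.Injective (L i) ∨
      (L i ⟨0, by omega⟩ = L i ⟨n - 1, by omega⟩ ∧
        ∀ a b : Fin n, a.val < n - 1 → b.val < n - 1 → L i a = L i b → a = b))
    (hcons : ∀ i : ℕ, (h : i + 1 < ℓ) →
      reduce (lastw (L ⟨i, by omega⟩)) = reduce (firstw (L ⟨i + 1, h⟩)))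
    : ∃ w : Fin (ℓ + n - 1) → ℕ, ∀ i : Fin ℓ,
        reduce (fun a : Fin n =>
          w ⟨i.val + a.val, by have := i.isLt; have := a.isLt; omega⟩) = L i := by
  classical
  set L' : ℕ → Fin n → ℕ := fun i => if h : i < ℓ then L ⟨i, h⟩ else fun _ => 0 with hL'
  have hL'eq : ∀ i : Fin ℓ, L' i.val = L i := by
    intro i
    simp only [hL', dif_pos i.isLt]
  have hL'eq' : ∀ (i : ℕ) (h : i < ℓ), L' i = L ⟨i, h⟩ := by
    intro i h
    simp only [hL', dif_pos h]
  have hshape' : ∀ i < ℓ, Function.Injective (L' i) ∨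
      (L' i ⟨0, by omega⟩ = L' i ⟨n - 1, by omega⟩ ∧
        ∀ a b : Fin n, a.val < n - 1 → b.val < n - 1 → L' i a = L' i b → a = b) := by
    intro i hi
    rw [hL'eq' i hi]
    exact hshape ⟨i, hi⟩
  have hcons' : ∀ i : ℕ, 1 ≤ i → i < ℓ → ∀ a b : Fin (n - 1),
      (lastw (L' (i - 1)) a ≤ lastw (L' (i - 1)) b ↔
        firstw (L' i) a ≤ firstw (L' i) b) := by
    intro i h1 h2 a b
    have h3 : i - 1 + 1 < ℓ := by omega
    have hc := hcons (i - 1) h3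
    rw [hL'eq' (i - 1) (by omega), hL'eq' i h2]
    have e : (⟨i, h2⟩ : Fin ℓ) = ⟨i - 1 + 1, h3⟩ := Fin.ext (by simp; omega)
    rw [e]
    rw [reduce_eq_reduceG, reduce_eq_reduceG] at hc
    constructor
    · intro h
      exact (reduceG_le_iff _ a b).mp (by rw [← hc]; exact (reduceG_le_iff _ a b).mpr h)
    · intro h
      exact (reduceG_le_iff _ a b).mp (by rw [hc]; exact (reduceG_le_iff _ a b).mpr h)
  obtain ⟨W, hW⟩ := build_word hn L' hshape' hcons' ℓ le_rfl
  refine ⟨fun j => reduceG (fun m : Fin (ℓ + n - 1) => W m.val) j, ?_⟩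
  intro i
  rw [reduce_eq_reduceG]
  refine (reduceG_eq_of_iff _ (L i) ?_).trans ?_
  · intro a b
    show reduceG (fun m : Fin (ℓ + n - 1) => W m.val) ⟨i.val + a.val, _⟩ ≤
      reduceG (fun m : Fin (ℓ + n - 1) => W m.val) ⟨i.val + b.val, _⟩ ↔ _
    rw [reduceG_le_iff]
    show W (i.val + a.val) ≤ W (i.val + b.val) ↔ _
    rw [hW i.val i.isLt a b, hL'eq i]
  · rw [← reduce_eq_reduceG]
    exact hred i
end

section
/- Let n ≥ 4 and let w = w_1 ⋯ w_k be a word of natural numbers with k ≥ n−1 such that every permutation of [n] is order-isomorphic to at most one n-window of w, the first n−1 letters of w are strictly decreasing, the last n−1 letters of w are strictly decreasing, and no n-window of w is order-isomorphic to a permutation in 𝒫. Then there exists a cyclic word z of length k + n + 1 such that every permutation of [n] covered by w, and every permutation in 𝒫, is order-isomorphic to exactly one cyclic n-window of z, and these are all distinct windows. -/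
/-- Two words are order-isomorphic. -/
def OrdIso {n : ℕ} (u v : Fin n → ℕ) : Prop := ∀ a b : Fin n, u a < u b ↔ v a < v b

/-- The `n`-window of `w` starting at position `i`. -/
def winAt {k : ℕ} (w : Fin k → ℕ) (i n : ℕ) (h : i + n ≤ k) : Fin n → ℕ :=
  fun a => w ⟨i + a.val, by have := a.isLt; omega⟩

/-- The cyclic `n`-window of the cyclic word `z` starting at position `j`. -/
def cwin {m : ℕ} (z : Fin m → ℕ) (j : Fin m) (n : ℕ) : Fin n → ℕ :=
  fun a => z ⟨(j.val + a.val) % m, Nat.mod_lt _ j.pos⟩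



/-! ### Auxiliary lemmas for the gluing construction -/

set_option maxHeartbeats 1600000

lemma OrdIso.symm' {n : ℕ} {u v : Fin n → ℕ} (h : OrdIso u v) : OrdIso v u :=
  fun a b => (h a b).symm

lemma OrdIso.trans' {n : ℕ} {u v x : Fin n → ℕ} (h : OrdIso u v) (h2 : OrdIso v x) :
    OrdIso u x := fun a b => (h a b).trans (h2 a b)

/-- normalization: two injective words with values exactly `{1,…,n}` that are
order-isomorphic are equal. -/
lemma ordiso_norm_eq {n : ℕ} {u v : Fin n → ℕ} (hu : Function.Injective u)
    (hub : ∀ a, 1 ≤ u a ∧ u a ≤ n) (hv : Function.Injective v)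
    (hvb : ∀ a, 1 ≤ v a ∧ v a ≤ n) (h : OrdIso u v) : u = v := by
  have key : ∀ (x : Fin n → ℕ), Function.Injective x → (∀ a, 1 ≤ x a ∧ x a ≤ n) →
      ∀ a, (Finset.univ.filter (fun b => x b ≤ x a)).card = x a := by
    intro x hx hxb a
    have himg : Finset.univ.image x = Finset.Icc 1 n := by
      apply Finset.eq_of_subset_of_card_le
      · intro j hj
        simp only [Finset.mem_image] at hj
        obtain ⟨b, _, rfl⟩ := hj
        simp [Finset.mem_Icc, (hxb b).1, (hxb b).2]
      · rw [Finset.card_image_of_injective _ hx]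
        simp [Nat.card_Icc]
    have h2 : (Finset.univ.filter (fun b => x b ≤ x a)).image x
        = (Finset.univ.image x).filter (fun j => j ≤ x a) := by
      ext j
      simp only [Finset.mem_image, Finset.mem_filter, Finset.mem_univ, true_and]
      constructor
      · rintro ⟨b, hb, rfl⟩; exact ⟨⟨b, rfl⟩, hb⟩
      · rintro ⟨⟨b, rfl⟩, hb⟩; exact ⟨b, hb, rfl⟩
    have h3 := Finset.card_image_of_injective
      (Finset.univ.filter (fun b => x b ≤ x a)) hx
    rw [h2, himg] at h3
    rw [← h3]
    have : (Finset.Icc 1 n).filter (fun j => j ≤ x a) = Finset.Icc 1 (x a) := by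
      ext j; simp only [Finset.mem_filter, Finset.mem_Icc]
      have := hxb a; omega
    rw [this, Nat.card_Icc]
    omega
  funext a
  have h1 := key u hu hub a
  have h2 := key v hv hvb a
  have : (Finset.univ.filter (fun b => u b ≤ u a))
      = (Finset.univ.filter (fun b => v b ≤ v a)) := by
    ext b
    simp only [Finset.mem_filter, Finset.mem_univ, true_and]
    have := h b a
    have := h a b
    omega
  rw [this] at h1
  omega

section words
variable {n : ℕ}

lemma wordA_one_eq_two : wordA n 1 = wordA n 2 := by
  funext i; have := i.isLt; simp only [wordA]; split_ifs <;> omega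

lemma wordA_inj {κ : ℕ} (h1 : 1 ≤ κ) (h2 : κ ≤ n) : Function.Injective (wordA n κ) := by
  intro a b hab; have ha := a.isLt; have hb := b.isLt
  simp only [wordA] at hab
  apply Fin.ext
  split_ifs at hab <;> omega

lemma wordA_bdd {κ : ℕ} (h1 : 1 ≤ κ) (h2 : κ ≤ n) :
    ∀ a, 1 ≤ wordA n κ a ∧ wordA n κ a ≤ n := by
  intro a; have ha := a.isLt; simp only [wordA]; split_ifs <;> omega

lemma wordId_inj : Function.Injective (wordId n) := by
  intro a b hab; simp only [wordId] at hab; exact Fin.ext (by omega)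

lemma wordId_bdd : ∀ a : Fin n, 1 ≤ wordId n a ∧ wordId n a ≤ n := by
  intro a; have := a.isLt; simp only [wordId]; omega

lemma wordB_inj {κ : ℕ} (h1 : 1 ≤ κ) (h2 : κ ≤ n - 2) : Function.Injective (wordB n κ) := by
  intro a b hab; have ha := a.isLt; have hb := b.isLt
  simp only [wordB] at hab; apply Fin.ext; split_ifs at hab <;> omega

lemma wordB_bdd {κ : ℕ} (h1 : 1 ≤ κ) (h2 : κ ≤ n - 2) (hn : 4 ≤ n) :
    ∀ a, 1 ≤ wordB n κ a ∧ wordB n κ a ≤ n := by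
  intro a; have ha := a.isLt; simp only [wordB]; split_ifs <;> omega

lemma wordC1_inj (hn : 4 ≤ n) : Function.Injective (wordC1 n) := by
  intro a b hab; have ha := a.isLt; have hb := b.isLt
  simp only [wordC1] at hab; apply Fin.ext; split_ifs at hab <;> omega

lemma wordC1_bdd (hn : 4 ≤ n) : ∀ a : Fin n, 1 ≤ wordC1 n a ∧ wordC1 n a ≤ n := by
  intro a; have := a.isLt; simp only [wordC1]; split_ifs <;> omega

lemma wordC2_inj (hn : 4 ≤ n) : Function.Injective (wordC2 n) := by
  intro a b hab; have ha := a.isLt; have hb := b.isLt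
  simp only [wordC2] at hab; apply Fin.ext; split_ifs at hab <;> omega

lemma wordC2_bdd (hn : 4 ≤ n) : ∀ a : Fin n, 1 ≤ wordC2 n a ∧ wordC2 n a ≤ n := by
  intro a; have := a.isLt; simp only [wordC2]; split_ifs <;> omega

lemma wordA_eq_iff (hn : 4 ≤ n) {κ1 κ2 : ℕ} (h1 : 2 ≤ κ1) (h1' : κ1 ≤ n) (h2 : 2 ≤ κ2)
    (h2' : κ2 ≤ n) (h : wordA n κ1 = wordA n κ2) : κ1 = κ2 := by
  have t := congrFun h ⟨n-1, by omega⟩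
  simp only [wordA] at t; split_ifs at t <;> omega

lemma wordA_ne_wordId (hn : 4 ≤ n) {κ : ℕ} (h1 : 1 ≤ κ) (h1' : κ ≤ n) :
    wordA n κ ≠ wordId n := by
  intro h; have t := congrFun h ⟨0, by omega⟩
  simp only [wordA, wordId] at t; split_ifs at t <;> omega

lemma wordA_ne_wordB (hn : 4 ≤ n) {κ κ' : ℕ} (h1 : 1 ≤ κ) (h1' : κ ≤ n) (h2 : 1 ≤ κ')
    (h2' : κ' ≤ n - 2) : wordA n κ ≠ wordB n κ' := by
  intro h; have t := congrFun h ⟨0, by omega⟩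
  simp only [wordA, wordB] at t; split_ifs at t <;> omega

lemma wordA_ne_wordC1 (hn : 4 ≤ n) {κ : ℕ} (h1 : 1 ≤ κ) (h1' : κ ≤ n) :
    wordA n κ ≠ wordC1 n := by
  intro h
  have t1 := congrFun h ⟨1, by omega⟩
  have t2 := congrFun h ⟨2, by omega⟩
  simp only [wordA, wordC1] at t1 t2; split_ifs at t1 t2 <;> omega

lemma wordA_ne_wordC2 (hn : 4 ≤ n) {κ : ℕ} (h1 : 1 ≤ κ) (h1' : κ ≤ n) :
    wordA n κ ≠ wordC2 n := by
  intro h; have t := congrFun h ⟨0, by omega⟩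
  simp only [wordA, wordC2] at t; split_ifs at t <;> omega

lemma wordId_ne_wordB (hn : 4 ≤ n) {κ' : ℕ} (h2 : 1 ≤ κ') (h2' : κ' ≤ n - 2) :
    wordId n ≠ wordB n κ' := by
  intro h; have t := congrFun h ⟨κ', by omega⟩
  simp only [wordId, wordB] at t; split_ifs at t <;> omega

lemma wordId_ne_wordC1 (hn : 4 ≤ n) : wordId n ≠ wordC1 n := by
  intro h; have t := congrFun h ⟨0, by omega⟩
  simp only [wordId, wordC1] at t; split_ifs at t <;> omega

lemma wordId_ne_wordC2 (hn : 4 ≤ n) : wordId n ≠ wordC2 n := by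
  intro h; have t := congrFun h ⟨1, by omega⟩
  simp only [wordId, wordC2] at t; split_ifs at t <;> omega

lemma wordB_eq_iff (hn : 4 ≤ n) {κ1 κ2 : ℕ} (h1 : 1 ≤ κ1) (h1' : κ1 ≤ n - 2) (h2 : 1 ≤ κ2)
    (h2' : κ2 ≤ n - 2) (h : wordB n κ1 = wordB n κ2) : κ1 = κ2 := by
  have t := congrFun h ⟨κ1, by omega⟩
  simp only [wordB] at t; split_ifs at t <;> omega

lemma wordB_ne_wordC1 (hn : 4 ≤ n) {κ' : ℕ} (h2 : 1 ≤ κ') (h2' : κ' ≤ n - 2) :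
    wordB n κ' ≠ wordC1 n := by
  intro h; have t := congrFun h ⟨0, by omega⟩
  simp only [wordB, wordC1] at t; split_ifs at t <;> omega

lemma wordB_ne_wordC2 (hn : 4 ≤ n) {κ' : ℕ} (h2 : 1 ≤ κ') (h2' : κ' ≤ n - 2) :
    wordB n κ' ≠ wordC2 n := by
  intro h
  have t1 := congrFun h ⟨1, by omega⟩
  have t2 := congrFun h ⟨2, by omega⟩
  simp only [wordB, wordC2] at t1 t2; split_ifs at t1 t2 <;> omega

lemma wordC1_ne_wordC2 (hn : 4 ≤ n) : wordC1 n ≠ wordC2 n := by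
  intro h; have t := congrFun h ⟨0, by omega⟩
  simp only [wordC1, wordC2] at t; split_ifs at t <;> omega

end words

/-- the glued cyclic word. -/
def zfun (n k : ℕ) (w : Fin k → ℕ) (w0 : ℕ) : Fin (k + n + 1) → ℕ := fun i =>
  if h : i.val < k then w ⟨i.val, h⟩ + n + 2
  else if i.val ≤ k + (n - 2) then i.val - k + 1
  else if i.val = k + n - 1 then w0 + n + 3
  else n

lemma cwin_eq_of_lt {m : ℕ} (z : Fin m → ℕ) (j : Fin m) {n : ℕ} (a : Fin n)
    (h : j.val + a.val < m) : cwin z j n a = z ⟨j.val + a.val, h⟩ := by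
  simp only [cwin]; congr 1; exact Fin.ext (Nat.mod_eq_of_lt h)

lemma cwin_eq_of_ge {m : ℕ} (z : Fin m → ℕ) (j : Fin m) {n : ℕ} (a : Fin n)
    (h1 : m ≤ j.val + a.val) (h2 : j.val + a.val - m < m) :
    cwin z j n a = z ⟨j.val + a.val - m, h2⟩ := by
  simp only [cwin]; congr 1; apply Fin.ext
  simp only []
  rw [Nat.mod_eq_sub_mod h1]
  exact Nat.mod_eq_of_lt h2

lemma zval_w (n k : ℕ) (w : Fin k → ℕ) (w0 : ℕ) (p : ℕ) (hp' : p < k + n + 1)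
    (q : ℕ) (hq : q < k) (hpq : p = q) :
    zfun n k w w0 ⟨p, hp'⟩ = w ⟨q, hq⟩ + n + 2 := by
  subst hpq; simp only [zfun]; rw [dif_pos hq]

lemma zval_g (n k : ℕ) (w : Fin k → ℕ) (w0 : ℕ) (p : ℕ) (hp' : p < k + n + 1)
    (h1 : k ≤ p) (h2 : p ≤ k + (n - 2)) (v : ℕ) (hv : p - k + 1 = v) :
    zfun n k w w0 ⟨p, hp'⟩ = v := by
  subst hv; simp only [zfun]; rw [dif_neg (by omega), if_pos h2]

lemma zval_big (n k : ℕ) (w : Fin k → ℕ) (w0 : ℕ) (hn : 4 ≤ n) (p : ℕ) (hp' : p < k + n + 1)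
    (h : p = k + n - 1) : zfun n k w w0 ⟨p, hp'⟩ = w0 + n + 3 := by
  simp only [zfun]; rw [dif_neg (by omega), if_neg (by omega), if_pos h]

lemma zval_last (n k : ℕ) (w : Fin k → ℕ) (w0 : ℕ) (hn : 4 ≤ n) (p : ℕ) (hp' : p < k + n + 1)
    (h : p = k + n) : zfun n k w w0 ⟨p, hp'⟩ = n := by
  simp only [zfun]; rw [dif_neg (by omega), if_neg (by omega), if_neg (by omega)]

lemma win_A (n k : ℕ) (hn : 4 ≤ n) (hk : n - 1 ≤ k) (w : Fin k → ℕ) (w0 : ℕ)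
    (Hd2 : ∀ x y : ℕ, x < y → y < n - 1 → ∀ (hx : k - (n-1) + x < k) (hy : k - (n-1) + y < k),
      w ⟨k - (n-1) + y, hy⟩ < w ⟨k - (n-1) + x, hx⟩)
    (i : ℕ) (hi : i ≤ n - 2) (j : Fin (k + n + 1)) (hj : j.val = k - (n-1) + i) :
    OrdIso (cwin (zfun n k w w0) j n) (wordA n (i + 2)) := by
  intro a b
  have ha := a.isLt; have hb := b.isLt
  have val1 : ∀ c : Fin n, c.val < n - 1 - i → ∀ (hc : k - (n-1) + (i + c.val) < k),
      cwin (zfun n k w w0) j n c = w ⟨k - (n-1) + (i + c.val), hc⟩ + n + 2 := by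
    intro c hc hck
    rw [cwin_eq_of_lt _ _ _ (by have := c.isLt; omega)]
    exact zval_w n k w w0 _ _ _ hck (by have := c.isLt; omega)
  have val2 : ∀ c : Fin n, n - 1 - i ≤ c.val →
      cwin (zfun n k w w0) j n c = i + c.val - (n - 1) + 1 := by
    intro c hc
    rw [cwin_eq_of_lt _ _ _ (by have := c.isLt; omega)]
    exact zval_g n k w w0 _ _ (by omega) (by have := c.isLt; omega) _ (by omega)
  have pat : ∀ c : Fin n, wordA n (i + 2) c
      = if c.val < n - 1 - i then n - c.val else c.val - (n - (i + 2)) := by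
    intro c; have := c.isLt; simp only [wordA]; split_ifs <;> omega
  have p1 := pat a; have p2 := pat b
  rcases lt_or_ge a.val (n - 1 - i) with haR | haR <;>
    rcases lt_or_ge b.val (n - 1 - i) with hbR | hbR
  · -- both tail
    rw [if_pos haR] at p1; rw [if_pos hbR] at p2
    have e1 := val1 a haR (by omega)
    have e2 := val1 b hbR (by omega)
    rcases lt_trichotomy a.val b.val with h | h | h
    · have := Hd2 (i + a.val) (i + b.val) (by omega) (by omega) (by omega) (by omega)
      omega
    · have hab : a = b := Fin.ext h
      subst hab; omega
    · have := Hd2 (i + b.val) (i + a.val) (by omega) (by omega) (by omega) (by omega)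
      omega
  · rw [if_pos haR] at p1; rw [if_neg (by omega)] at p2
    have e1 := val1 a haR (by omega)
    have e2 := val2 b hbR
    omega
  · rw [if_neg (by omega)] at p1; rw [if_pos hbR] at p2
    have e1 := val2 a haR
    have e2 := val1 b hbR (by omega)
    omega
  · rw [if_neg (by omega)] at p1; rw [if_neg (by omega)] at p2
    have e1 := val2 a haR
    have e2 := val2 b hbR
    omega

lemma win_Id (n k : ℕ) (hn : 4 ≤ n) (hk : n - 1 ≤ k) (w : Fin k → ℕ) (w0 : ℕ)
    (j : Fin (k + n + 1)) (hj : j.val = k) :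
    OrdIso (cwin (zfun n k w w0) j n) (wordId n) := by
  intro a b
  have ha := a.isLt; have hb := b.isLt
  have val1 : ∀ c : Fin n, c.val ≤ n - 2 →
      cwin (zfun n k w w0) j n c = c.val + 1 := by
    intro c hc
    rw [cwin_eq_of_lt _ _ _ (by have := c.isLt; omega)]
    exact zval_g n k w w0 _ _ (by omega) (by omega) _ (by omega)
  have val2 : ∀ c : Fin n, c.val = n - 1 →
      cwin (zfun n k w w0) j n c = w0 + n + 3 := by
    intro c hc
    rw [cwin_eq_of_lt _ _ _ (by have := c.isLt; omega)]
    simp only [zfun]; rw [dif_neg (by omega), if_neg (by omega), if_pos (by omega)]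
  simp only [wordId]
  rcases le_or_gt a.val (n - 2) with haR | haR <;> rcases le_or_gt b.val (n - 2) with hbR | hbR
  · have e1 := val1 a haR; have e2 := val1 b hbR; omega
  · have e1 := val1 a haR; have e2 := val2 b (by omega); omega
  · have e1 := val2 a (by omega); have e2 := val1 b hbR; omega
  · have e1 := val2 a (by omega); have e2 := val2 b (by omega); omega

lemma win_B (n k : ℕ) (hn : 4 ≤ n) (hk : n - 1 ≤ k) (w : Fin k → ℕ) (w0 : ℕ)
    (Hd1 : ∀ x y : ℕ, x < y → y < n - 1 → ∀ (hx : x < k) (hy : y < k),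
      w ⟨y, hy⟩ < w ⟨x, hx⟩)
    (Hbig : ∀ x : ℕ, x < n - 1 → ∀ (hx : x < k), w ⟨x, hx⟩ ≤ w0)
    (s : ℕ) (hs1 : 1 ≤ s) (hs2 : s ≤ n - 2) (j : Fin (k + n + 1)) (hj : j.val = k + s) :
    OrdIso (cwin (zfun n k w w0) j n) (wordB n (n - 1 - s)) := by
  intro a b
  have ha := a.isLt; have hb := b.isLt
  have val1 : ∀ c : Fin n, c.val < n - 1 - s →
      cwin (zfun n k w w0) j n c = s + c.val + 1 := by
    intro c hc
    rw [cwin_eq_of_lt _ _ _ (by have := c.isLt; omega)]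
    exact zval_g n k w w0 _ _ (by omega) (by omega) _ (by omega)
  have val2 : ∀ c : Fin n, c.val = n - 1 - s →
      cwin (zfun n k w w0) j n c = w0 + n + 3 := by
    intro c hc
    rw [cwin_eq_of_lt _ _ _ (by have := c.isLt; omega)]
    exact zval_big n k w w0 hn _ _ (by omega)
  have val3 : ∀ c : Fin n, c.val = n - s →
      cwin (zfun n k w w0) j n c = n := by
    intro c hc
    rw [cwin_eq_of_lt _ _ _ (by have := c.isLt; omega)]
    exact zval_last n k w w0 hn _ _ (by omega)
  have val4 : ∀ c : Fin n, n - s < c.val → ∀ (hc : s + c.val - n - 1 < k),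
      cwin (zfun n k w w0) j n c = w ⟨s + c.val - n - 1, hc⟩ + n + 2 := by
    intro c hc hck
    rw [cwin_eq_of_ge _ _ _ (by omega) (by have := c.isLt; omega)]
    exact zval_w n k w w0 _ _ _ hck (by omega)
  have pat : ∀ c : Fin n, wordB n (n - 1 - s) c =
      if c.val < n - 1 - s then c.val + 1
      else if c.val = n - 1 - s then n
      else if c.val = n - s then n - s
      else 2 * n - s - c.val := by
    intro c; have := c.isLt; simp only [wordB]; split_ifs <;> omega
  have getv : ∀ c : Fin n,
      (c.val < n - 1 - s ∧ cwin (zfun n k w w0) j n c = s + c.val + 1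
        ∧ wordB n (n - 1 - s) c = c.val + 1) ∨
      (c.val = n - 1 - s ∧ cwin (zfun n k w w0) j n c = w0 + n + 3
        ∧ wordB n (n - 1 - s) c = n) ∨
      (c.val = n - s ∧ cwin (zfun n k w w0) j n c = n
        ∧ wordB n (n - 1 - s) c = n - s) ∨
      (n - s < c.val ∧ wordB n (n - 1 - s) c = 2 * n - s - c.val ∧
        ∃ (hc : s + c.val - n - 1 < k),
        cwin (zfun n k w w0) j n c = w ⟨s + c.val - n - 1, hc⟩ + n + 2) := by
    intro c
    have hc := c.isLt
    have pc := pat c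
    rcases lt_or_ge c.val (n - 1 - s) with h | h
    · rw [if_pos h] at pc
      exact Or.inl ⟨h, val1 c h, pc⟩
    rcases eq_or_lt_of_le h with h' | h'
    · rw [if_neg (by omega), if_pos h'.symm] at pc
      exact Or.inr (Or.inl ⟨h'.symm, val2 c h'.symm, pc⟩)
    rcases lt_or_ge c.val (n - s + 1) with h'' | h''
    · rw [if_neg (by omega), if_neg (by omega), if_pos (by omega)] at pc
      exact Or.inr (Or.inr (Or.inl ⟨by omega, val3 c (by omega), pc⟩))
    · rw [if_neg (by omega), if_neg (by omega), if_neg (by omega)] at pc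
      exact Or.inr (Or.inr (Or.inr ⟨by omega, pc, by omega, val4 c (by omega) (by omega)⟩))
  rcases getv a with ⟨haR, e1, p1⟩ | ⟨haR, e1, p1⟩ | ⟨haR, e1, p1⟩ | ⟨haR, p1, hac, e1⟩ <;>
    rcases getv b with ⟨hbR, e2, p2⟩ | ⟨hbR, e2, p2⟩ | ⟨hbR, e2, p2⟩ | ⟨hbR, p2, hbc, e2⟩
  · omega
  · omega
  · omega
  · have := Hbig (s + b.val - n - 1) (by omega) hbc; omega
  · omega
  · omega
  · omega
  · have := Hbig (s + b.val - n - 1) (by omega) hbc; omega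
  · omega
  · omega
  · omega
  · omega
  · have := Hbig (s + a.val - n - 1) (by omega) hac; omega
  · have := Hbig (s + a.val - n - 1) (by omega) hac; omega
  · omega
  · -- both head letters
    rcases lt_trichotomy a.val b.val with h | h | h
    · have := Hd1 (s + a.val - n - 1) (s + b.val - n - 1) (by omega) (by omega) hac hbc
      omega
    · have hab : a = b := Fin.ext h
      subst hab
      have he : (⟨s + a.val - n - 1, hac⟩ : Fin k) = ⟨s + a.val - n - 1, hbc⟩ := rfl
      rw [he] at e1; omega
    · have := Hd1 (s + b.val - n - 1) (s + a.val - n - 1) (by omega) (by omega) hbc hac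
      omega

lemma win_C1 (n k : ℕ) (hn : 4 ≤ n) (hk : n - 1 ≤ k) (w : Fin k → ℕ) (w0 : ℕ)
    (Hd1 : ∀ x y : ℕ, x < y → y < n - 1 → ∀ (hx : x < k) (hy : y < k),
      w ⟨y, hy⟩ < w ⟨x, hx⟩)
    (Hbig : ∀ x : ℕ, x < n - 1 → ∀ (hx : x < k), w ⟨x, hx⟩ ≤ w0)
    (j : Fin (k + n + 1)) (hj : j.val = k + n - 1) :
    OrdIso (cwin (zfun n k w w0) j n) (wordC1 n) := by
  intro a b
  have ha := a.isLt; have hb := b.isLt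
  have getv : ∀ c : Fin n,
      (c.val = 0 ∧ cwin (zfun n k w w0) j n c = w0 + n + 3 ∧ wordC1 n c = n) ∨
      (c.val = 1 ∧ cwin (zfun n k w w0) j n c = n ∧ wordC1 n c = 1) ∨
      (2 ≤ c.val ∧ wordC1 n c = n + 1 - c.val ∧ ∃ (hc : c.val - 2 < k),
        cwin (zfun n k w w0) j n c = w ⟨c.val - 2, hc⟩ + n + 2) := by
    intro c
    have hc := c.isLt
    rcases Nat.lt_or_ge c.val 2 with h | h
    · rcases Nat.lt_or_ge c.val 1 with h0 | h0
      · refine Or.inl ⟨by omega, ?_, by simp only [wordC1]; rw [if_pos (by omega)]⟩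
        rw [cwin_eq_of_lt _ _ _ (by omega)]
        exact zval_big n k w w0 hn _ _ (by omega)
      · refine Or.inr (Or.inl ⟨by omega, ?_, by
          simp only [wordC1]; rw [if_neg (by omega), if_pos (by omega)]⟩)
        rw [cwin_eq_of_lt _ _ _ (by omega)]
        exact zval_last n k w w0 hn _ _ (by omega)
    · refine Or.inr (Or.inr ⟨h, by
        simp only [wordC1]; rw [if_neg (by omega), if_neg (by omega)], by omega, ?_⟩)
      rw [cwin_eq_of_ge _ _ _ (by omega) (by omega)]
      exact zval_w n k w w0 _ _ _ (by omega) (by omega)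
  rcases getv a with ⟨haR, e1, p1⟩ | ⟨haR, e1, p1⟩ | ⟨haR, p1, hac, e1⟩ <;>
    rcases getv b with ⟨hbR, e2, p2⟩ | ⟨hbR, e2, p2⟩ | ⟨hbR, p2, hbc, e2⟩
  · omega
  · omega
  · have := Hbig (b.val - 2) (by omega) hbc; omega
  · omega
  · omega
  · omega
  · have := Hbig (a.val - 2) (by omega) hac; omega
  · omega
  · rcases lt_trichotomy a.val b.val with h | h | h
    · have := Hd1 (a.val - 2) (b.val - 2) (by omega) (by omega) hac hbc; omega
    · have hab : a = b := Fin.ext h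
      subst hab
      have he : (⟨a.val - 2, hac⟩ : Fin k) = ⟨a.val - 2, hbc⟩ := rfl
      rw [he] at e1; omega
    · have := Hd1 (b.val - 2) (a.val - 2) (by omega) (by omega) hbc hac; omega

lemma win_C2 (n k : ℕ) (hn : 4 ≤ n) (hk : n - 1 ≤ k) (w : Fin k → ℕ) (w0 : ℕ)
    (Hd1 : ∀ x y : ℕ, x < y → y < n - 1 → ∀ (hx : x < k) (hy : y < k),
      w ⟨y, hy⟩ < w ⟨x, hx⟩)
    (j : Fin (k + n + 1)) (hj : j.val = k + n) :
    OrdIso (cwin (zfun n k w w0) j n) (wordC2 n) := by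
  intro a b
  have ha := a.isLt; have hb := b.isLt
  have getv : ∀ c : Fin n,
      (c.val = 0 ∧ cwin (zfun n k w w0) j n c = n ∧ wordC2 n c = 1) ∨
      (1 ≤ c.val ∧ wordC2 n c = n + 1 - c.val ∧ ∃ (hc : c.val - 1 < k),
        cwin (zfun n k w w0) j n c = w ⟨c.val - 1, hc⟩ + n + 2) := by
    intro c
    have hc := c.isLt
    rcases Nat.lt_or_ge c.val 1 with h | h
    · refine Or.inl ⟨by omega, ?_, by simp only [wordC2]; rw [if_pos (by omega)]⟩
      rw [cwin_eq_of_lt _ _ _ (by omega)]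
      exact zval_last n k w w0 hn _ _ (by omega)
    · refine Or.inr ⟨h, by simp only [wordC2]; rw [if_neg (by omega)], by omega, ?_⟩
      rw [cwin_eq_of_ge _ _ _ (by omega) (by omega)]
      exact zval_w n k w w0 _ _ _ (by omega) (by omega)
  rcases getv a with ⟨haR, e1, p1⟩ | ⟨haR, p1, hac, e1⟩ <;>
    rcases getv b with ⟨hbR, e2, p2⟩ | ⟨hbR, p2, hbc, e2⟩
  · omega
  · omega
  · omega
  · rcases lt_trichotomy a.val b.val with h | h | h
    · have := Hd1 (a.val - 1) (b.val - 1) (by omega) (by omega) hac hbc; omega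
    · have hab : a = b := Fin.ext h
      subst hab
      have he : (⟨a.val - 1, hac⟩ : Fin k) = ⟨a.val - 1, hbc⟩ := rfl
      rw [he] at e1; omega
    · have := Hd1 (b.val - 1) (a.val - 1) (by omega) (by omega) hbc hac; omega

lemma win_interior (n k : ℕ) (w : Fin k → ℕ) (w0 : ℕ)
    (j : Fin (k + n + 1)) (h : j.val + n ≤ k) :
    OrdIso (cwin (zfun n k w w0) j n) (winAt w j.val n h) := by
  intro a b
  have val : ∀ c : Fin n, cwin (zfun n k w w0) j n c = winAt w j.val n h c + (n + 2) := by
    intro c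
    have hc := c.isLt
    rw [cwin_eq_of_lt _ _ _ (by omega)]
    have := zval_w n k w w0 (j.val + c.val) (by omega) (j.val + c.val) (by omega) rfl
    rw [this]
    simp only [winAt]
    omega
  rw [val a, val b]
  simp only [winAt]
  omega

/-- Lemma 5 (with 𝒫' = 𝒫): if `w` covers every permutation of `[n]` at most once, its
first `n-1` and last `n-1` letters are strictly decreasing, and no window of `w` is
order-isomorphic to a permutation of 𝒫, then there is a cyclic word `z` of length
`k + n + 1` covering every permutation covered by `w` and every permutation of 𝒫
exactly once. -/
theorem glue_lemma (n k : ℕ) (hn : 4 ≤ n) (hk : n - 1 ≤ k) (w : Fin k → ℕ)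
    (hatmost : ∀ π : Equiv.Perm (Fin n), ∀ i₁ i₂ : ℕ, (h₁ : i₁ + n ≤ k) →
      (h₂ : i₂ + n ≤ k) → OrdIso (winAt w i₁ n h₁) (permWord π) →
      OrdIso (winAt w i₂ n h₂) (permWord π) → i₁ = i₂)
    (hdec1 : ∀ a b : ℕ, (hab : a < b) → (hb : b < n - 1) →
      w ⟨b, by omega⟩ < w ⟨a, by omega⟩)
    (hdec2 : ∀ a b : ℕ, (hab : a < b) → (hb : b < n - 1) →
      w ⟨k - (n - 1) + b, by omega⟩ < w ⟨k - (n - 1) + a, by omega⟩)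
    (hP : ∀ i : ℕ, (h : i + n ≤ k) → ∀ p ∈ Pset n, ¬ OrdIso (winAt w i n h) p) :
    ∃ z : Fin (k + n + 1) → ℕ, ∀ π : Equiv.Perm (Fin n),
      ((∃ i : ℕ, ∃ h : i + n ≤ k, OrdIso (winAt w i n h) (permWord π)) ∨
        permWord π ∈ Pset n) →
      ∃! j : Fin (k + n + 1), OrdIso (cwin z j n) (permWord π) := by
  have hk0 : 0 < k := by omega
  refine ⟨zfun n k w (w ⟨0, hk0⟩), ?_⟩
  intro π hcov
  have Hd1 : ∀ x y : ℕ, x < y → y < n - 1 → ∀ (hx : x < k) (hy : y < k),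
      w ⟨y, hy⟩ < w ⟨x, hx⟩ := fun x y h1 h2 hx hy => hdec1 x y h1 h2
  have Hd2 : ∀ x y : ℕ, x < y → y < n - 1 →
      ∀ (hx : k - (n - 1) + x < k) (hy : k - (n - 1) + y < k),
      w ⟨k - (n - 1) + y, hy⟩ < w ⟨k - (n - 1) + x, hx⟩ :=
    fun x y h1 h2 hx hy => hdec2 x y h1 h2
  have Hbig : ∀ x : ℕ, x < n - 1 → ∀ (hx : x < k), w ⟨x, hx⟩ ≤ w ⟨0, hk0⟩ := by
    intro x hx hxk
    rcases Nat.eq_zero_or_pos x with rfl | hpos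
    · exact le_of_eq rfl
    · exact le_of_lt (Hd1 0 x hpos hx hk0 hxk)
  have hPinj : Function.Injective (permWord π) := by
    intro a b hab
    simp only [permWord] at hab
    exact π.injective (Fin.ext (by omega))
  have hPbdd : ∀ a, 1 ≤ permWord π a ∧ permWord π a ≤ n := by
    intro a; have := (π a).isLt; simp only [permWord]; omega
  have classify : ∀ j : Fin (k + n + 1), j.val + n ≤ k ∨
      (∃ i ≤ n - 2, j.val = k - (n - 1) + i) ∨ j.val = k ∨
      (∃ s, 1 ≤ s ∧ s ≤ n - 2 ∧ j.val = k + s) ∨ j.val = k + n - 1 ∨ j.val = k + n := by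
    intro j
    have := j.isLt
    by_cases h0 : j.val + n ≤ k
    · exact Or.inl h0
    by_cases h1 : j.val < k
    · exact Or.inr (Or.inl ⟨j.val - (k - (n - 1)), by omega, by omega⟩)
    by_cases h2 : j.val = k
    · exact Or.inr (Or.inr (Or.inl h2))
    by_cases h3 : j.val ≤ k + (n - 2)
    · exact Or.inr (Or.inr (Or.inr (Or.inl ⟨j.val - k, by omega, by omega, by omega⟩)))
    by_cases h4 : j.val = k + n - 1
    · exact Or.inr (Or.inr (Or.inr (Or.inr (Or.inl h4))))
    · exact Or.inr (Or.inr (Or.inr (Or.inr (Or.inr (by omega)))))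
  have norm_eq : ∀ (j₂ : Fin (k + n + 1)) (Q : Fin n → ℕ),
      OrdIso (cwin (zfun n k w (w ⟨0, hk0⟩)) j₂ n) (permWord π) →
      OrdIso (cwin (zfun n k w (w ⟨0, hk0⟩)) j₂ n) Q → Function.Injective Q →
      (∀ a, 1 ≤ Q a ∧ Q a ≤ n) → permWord π = Q := by
    intro j₂ Q h1 h2 hQi hQb
    exact ordiso_norm_eq hPinj hPbdd hQi hQb (h1.symm'.trans' h2)
  have memA : ∀ i2 : ℕ, i2 ≤ n - 2 → wordA n (i2 + 2) ∈ Pset n := by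
    intro i2 hi2
    exact Or.inl ⟨i2 + 2, by omega, by omega, rfl⟩
  have memId : wordId n ∈ Pset n := Or.inr (Or.inl rfl)
  have memB : ∀ s : ℕ, 1 ≤ s → s ≤ n - 2 → wordB n (n - 1 - s) ∈ Pset n := by
    intro s hs1 hs2
    exact Or.inr (Or.inr (Or.inl ⟨n - 1 - s, by omega, by omega, rfl⟩))
  have memC1 : wordC1 n ∈ Pset n := Or.inr (Or.inr (Or.inr (Or.inl rfl)))
  have memC2 : wordC2 n ∈ Pset n := Or.inr (Or.inr (Or.inr (Or.inr rfl)))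
  rcases hcov with ⟨i, h, hiso⟩ | hmem
  · -- π is covered by a window of w
    refine ⟨⟨i, by omega⟩, ?_, ?_⟩
    · exact (win_interior n k w (w ⟨0, hk0⟩) ⟨i, by omega⟩ h).trans' hiso
    · intro j₂ hj₂
      rcases classify j₂ with hc | ⟨i2, hi2, hjv⟩ | hjv | ⟨s, hs1, hs2, hjv⟩ | hjv | hjv
      · have hw2 : OrdIso (winAt w j₂.val n hc) (permWord π) :=
          (win_interior n k w (w ⟨0, hk0⟩) j₂ hc).symm'.trans' hj₂
        have := hatmost π j₂.val i hc h hw2 hiso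
        apply Fin.ext
        show j₂.val = i
        omega
      · exact absurd (hiso.trans' (hj₂.symm'.trans'
          (win_A n k hn hk w (w ⟨0, hk0⟩) Hd2 i2 hi2 j₂ hjv)))
          (hP i h (wordA n (i2 + 2)) (memA i2 hi2))
      · exact absurd (hiso.trans' (hj₂.symm'.trans'
          (win_Id n k hn hk w (w ⟨0, hk0⟩) j₂ hjv)))
          (hP i h (wordId n) memId)
      · exact absurd (hiso.trans' (hj₂.symm'.trans'
          (win_B n k hn hk w (w ⟨0, hk0⟩) Hd1 Hbig s hs1 hs2 j₂ hjv)))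
          (hP i h (wordB n (n - 1 - s)) (memB s hs1 hs2))
      · exact absurd (hiso.trans' (hj₂.symm'.trans'
          (win_C1 n k hn hk w (w ⟨0, hk0⟩) Hd1 Hbig j₂ hjv)))
          (hP i h (wordC1 n) memC1)
      · exact absurd (hiso.trans' (hj₂.symm'.trans'
          (win_C2 n k hn hk w (w ⟨0, hk0⟩) Hd1 j₂ hjv)))
          (hP i h (wordC2 n) memC2)
  · -- permWord π ∈ 𝒫
    have hmem' := hmem
    simp only [Pset, Set.mem_setOf_eq] at hmem
    have interiorCase : ∀ (j₂ : Fin (k + n + 1)) (hc : j₂.val + n ≤ k),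
        OrdIso (cwin (zfun n k w (w ⟨0, hk0⟩)) j₂ n) (permWord π) → False := by
      intro j₂ hc hj₂
      exact hP j₂.val hc (permWord π) hmem'
        ((win_interior n k w (w ⟨0, hk0⟩) j₂ hc).symm'.trans' hj₂)
    rcases hmem with ⟨κ, hκ1, hκ2, hPeq⟩ | hPeq | ⟨κ, hκ1, hκ2, hPeq⟩ | hPeq | hPeq
    · -- wordA
      obtain ⟨i₁, hi₁, hPeq2⟩ : ∃ i₁, i₁ ≤ n - 2 ∧ permWord π = wordA n (i₁ + 2) := by
        by_cases hκ : κ = 1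
        · exact ⟨0, by omega, by rw [hPeq, hκ]; exact wordA_one_eq_two⟩
        · refine ⟨κ - 2, by omega, ?_⟩
          have hh : κ - 2 + 2 = κ := by omega
          rw [hPeq, hh]
      refine ⟨⟨k - (n - 1) + i₁, by omega⟩, ?_, ?_⟩
      · have hQ := win_A n k hn hk w (w ⟨0, hk0⟩) Hd2 i₁ hi₁ ⟨k - (n - 1) + i₁, by omega⟩ rfl
        rw [← hPeq2] at hQ
        exact hQ
      · intro j₂ hj₂
        rcases classify j₂ with hc | ⟨i2, hi2, hjv⟩ | hjv | ⟨s, hs1, hs2, hjv⟩ | hjv | hjv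
        · exact absurd hj₂ (fun hh => interiorCase j₂ hc hh)
        · have hQ := win_A n k hn hk w (w ⟨0, hk0⟩) Hd2 i2 hi2 j₂ hjv
          have hPQ := norm_eq j₂ (wordA n (i2 + 2)) hj₂ hQ
            (wordA_inj (by omega) (by omega)) (wordA_bdd (by omega) (by omega))
          have := wordA_eq_iff hn (by omega) (by omega) (by omega) (by omega)
            (hPeq2.symm.trans hPQ)
          apply Fin.ext
          show j₂.val = k - (n - 1) + i₁
          omega
        · exfalso
          have hQ := win_Id n k hn hk w (w ⟨0, hk0⟩) j₂ hjv
          have hPQ := norm_eq j₂ (wordId n) hj₂ hQ wordId_inj wordId_bdd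
          exact wordA_ne_wordId hn (by omega) (by omega) (hPeq2.symm.trans hPQ)
        · exfalso
          have hQ := win_B n k hn hk w (w ⟨0, hk0⟩) Hd1 Hbig s hs1 hs2 j₂ hjv
          have hPQ := norm_eq j₂ (wordB n (n - 1 - s)) hj₂ hQ
            (wordB_inj (by omega) (by omega)) (wordB_bdd (by omega) (by omega) hn)
          exact wordA_ne_wordB hn (by omega) (by omega) (by omega) (by omega)
            (hPeq2.symm.trans hPQ)
        · exfalso
          have hQ := win_C1 n k hn hk w (w ⟨0, hk0⟩) Hd1 Hbig j₂ hjv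
          have hPQ := norm_eq j₂ (wordC1 n) hj₂ hQ (wordC1_inj hn) (wordC1_bdd hn)
          exact wordA_ne_wordC1 hn (by omega) (by omega) (hPeq2.symm.trans hPQ)
        · exfalso
          have hQ := win_C2 n k hn hk w (w ⟨0, hk0⟩) Hd1 j₂ hjv
          have hPQ := norm_eq j₂ (wordC2 n) hj₂ hQ (wordC2_inj hn) (wordC2_bdd hn)
          exact wordA_ne_wordC2 hn (by omega) (by omega) (hPeq2.symm.trans hPQ)
    · -- wordId
      refine ⟨⟨k, by omega⟩, ?_, ?_⟩
      · have hQ := win_Id n k hn hk w (w ⟨0, hk0⟩) ⟨k, by omega⟩ rfl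
        rw [← hPeq] at hQ
        exact hQ
      · intro j₂ hj₂
        rcases classify j₂ with hc | ⟨i2, hi2, hjv⟩ | hjv | ⟨s, hs1, hs2, hjv⟩ | hjv | hjv
        · exact absurd hj₂ (fun hh => interiorCase j₂ hc hh)
        · exfalso
          have hQ := win_A n k hn hk w (w ⟨0, hk0⟩) Hd2 i2 hi2 j₂ hjv
          have hPQ := norm_eq j₂ (wordA n (i2 + 2)) hj₂ hQ
            (wordA_inj (by omega) (by omega)) (wordA_bdd (by omega) (by omega))
          exact wordA_ne_wordId hn (by omega) (by omega) (hPeq.symm.trans hPQ).symm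
        · apply Fin.ext
          show j₂.val = k
          omega
        · exfalso
          have hQ := win_B n k hn hk w (w ⟨0, hk0⟩) Hd1 Hbig s hs1 hs2 j₂ hjv
          have hPQ := norm_eq j₂ (wordB n (n - 1 - s)) hj₂ hQ
            (wordB_inj (by omega) (by omega)) (wordB_bdd (by omega) (by omega) hn)
          exact wordId_ne_wordB hn (by omega) (by omega) (hPeq.symm.trans hPQ)
        · exfalso
          have hQ := win_C1 n k hn hk w (w ⟨0, hk0⟩) Hd1 Hbig j₂ hjv
          have hPQ := norm_eq j₂ (wordC1 n) hj₂ hQ (wordC1_inj hn) (wordC1_bdd hn)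
          exact wordId_ne_wordC1 hn (hPeq.symm.trans hPQ)
        · exfalso
          have hQ := win_C2 n k hn hk w (w ⟨0, hk0⟩) Hd1 j₂ hjv
          have hPQ := norm_eq j₂ (wordC2 n) hj₂ hQ (wordC2_inj hn) (wordC2_bdd hn)
          exact wordId_ne_wordC2 hn (hPeq.symm.trans hPQ)
    · -- wordB
      have hPeq2 : permWord π = wordB n (n - 1 - (n - 1 - κ)) := by
        have hh : n - 1 - (n - 1 - κ) = κ := by omega
        rw [hPeq, hh]
      refine ⟨⟨k + (n - 1 - κ), by omega⟩, ?_, ?_⟩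
      · have hQ := win_B n k hn hk w (w ⟨0, hk0⟩) Hd1 Hbig (n - 1 - κ) (by omega) (by omega)
          ⟨k + (n - 1 - κ), by omega⟩ rfl
        rw [← hPeq2] at hQ
        exact hQ
      · intro j₂ hj₂
        rcases classify j₂ with hc | ⟨i2, hi2, hjv⟩ | hjv | ⟨s, hs1, hs2, hjv⟩ | hjv | hjv
        · exact absurd hj₂ (fun hh => interiorCase j₂ hc hh)
        · exfalso
          have hQ := win_A n k hn hk w (w ⟨0, hk0⟩) Hd2 i2 hi2 j₂ hjv
          have hPQ := norm_eq j₂ (wordA n (i2 + 2)) hj₂ hQ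
            (wordA_inj (by omega) (by omega)) (wordA_bdd (by omega) (by omega))
          exact wordA_ne_wordB hn (by omega) (by omega) (by omega) (by omega)
            (hPeq.symm.trans hPQ).symm
        · exfalso
          have hQ := win_Id n k hn hk w (w ⟨0, hk0⟩) j₂ hjv
          have hPQ := norm_eq j₂ (wordId n) hj₂ hQ wordId_inj wordId_bdd
          exact wordId_ne_wordB hn (by omega) (by omega) (hPeq.symm.trans hPQ).symm
        · have hQ := win_B n k hn hk w (w ⟨0, hk0⟩) Hd1 Hbig s hs1 hs2 j₂ hjv
          have hPQ := norm_eq j₂ (wordB n (n - 1 - s)) hj₂ hQ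
            (wordB_inj (by omega) (by omega)) (wordB_bdd (by omega) (by omega) hn)
          have := wordB_eq_iff hn (by omega) (by omega) (by omega) (by omega)
            (hPeq.symm.trans hPQ)
          apply Fin.ext
          show j₂.val = k + (n - 1 - κ)
          omega
        · exfalso
          have hQ := win_C1 n k hn hk w (w ⟨0, hk0⟩) Hd1 Hbig j₂ hjv
          have hPQ := norm_eq j₂ (wordC1 n) hj₂ hQ (wordC1_inj hn) (wordC1_bdd hn)
          exact wordB_ne_wordC1 hn (by omega) (by omega) (hPeq.symm.trans hPQ)
        · exfalso
          have hQ := win_C2 n k hn hk w (w ⟨0, hk0⟩) Hd1 j₂ hjv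
          have hPQ := norm_eq j₂ (wordC2 n) hj₂ hQ (wordC2_inj hn) (wordC2_bdd hn)
          exact wordB_ne_wordC2 hn (by omega) (by omega) (hPeq.symm.trans hPQ)
    · -- wordC1
      refine ⟨⟨k + n - 1, by omega⟩, ?_, ?_⟩
      · have hQ := win_C1 n k hn hk w (w ⟨0, hk0⟩) Hd1 Hbig ⟨k + n - 1, by omega⟩ rfl
        rw [← hPeq] at hQ
        exact hQ
      · intro j₂ hj₂
        rcases classify j₂ with hc | ⟨i2, hi2, hjv⟩ | hjv | ⟨s, hs1, hs2, hjv⟩ | hjv | hjv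
        · exact absurd hj₂ (fun hh => interiorCase j₂ hc hh)
        · exfalso
          have hQ := win_A n k hn hk w (w ⟨0, hk0⟩) Hd2 i2 hi2 j₂ hjv
          have hPQ := norm_eq j₂ (wordA n (i2 + 2)) hj₂ hQ
            (wordA_inj (by omega) (by omega)) (wordA_bdd (by omega) (by omega))
          exact wordA_ne_wordC1 hn (by omega) (by omega) (hPeq.symm.trans hPQ).symm
        · exfalso
          have hQ := win_Id n k hn hk w (w ⟨0, hk0⟩) j₂ hjv
          have hPQ := norm_eq j₂ (wordId n) hj₂ hQ wordId_inj wordId_bdd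
          exact wordId_ne_wordC1 hn (hPeq.symm.trans hPQ).symm
        · exfalso
          have hQ := win_B n k hn hk w (w ⟨0, hk0⟩) Hd1 Hbig s hs1 hs2 j₂ hjv
          have hPQ := norm_eq j₂ (wordB n (n - 1 - s)) hj₂ hQ
            (wordB_inj (by omega) (by omega)) (wordB_bdd (by omega) (by omega) hn)
          exact wordB_ne_wordC1 hn (by omega) (by omega) (hPeq.symm.trans hPQ).symm
        · apply Fin.ext
          show j₂.val = k + n - 1
          omega
        · exfalso
          have hQ := win_C2 n k hn hk w (w ⟨0, hk0⟩) Hd1 j₂ hjv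
          have hPQ := norm_eq j₂ (wordC2 n) hj₂ hQ (wordC2_inj hn) (wordC2_bdd hn)
          exact wordC1_ne_wordC2 hn (hPeq.symm.trans hPQ)
    · -- wordC2
      refine ⟨⟨k + n, by omega⟩, ?_, ?_⟩
      · have hQ := win_C2 n k hn hk w (w ⟨0, hk0⟩) Hd1 ⟨k + n, by omega⟩ rfl
        rw [← hPeq] at hQ
        exact hQ
      · intro j₂ hj₂
        rcases classify j₂ with hc | ⟨i2, hi2, hjv⟩ | hjv | ⟨s, hs1, hs2, hjv⟩ | hjv | hjv
        · exact absurd hj₂ (fun hh => interiorCase j₂ hc hh)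
        · exfalso
          have hQ := win_A n k hn hk w (w ⟨0, hk0⟩) Hd2 i2 hi2 j₂ hjv
          have hPQ := norm_eq j₂ (wordA n (i2 + 2)) hj₂ hQ
            (wordA_inj (by omega) (by omega)) (wordA_bdd (by omega) (by omega))
          exact wordA_ne_wordC2 hn (by omega) (by omega) (hPeq.symm.trans hPQ).symm
        · exfalso
          have hQ := win_Id n k hn hk w (w ⟨0, hk0⟩) j₂ hjv
          have hPQ := norm_eq j₂ (wordId n) hj₂ hQ wordId_inj wordId_bdd
          exact wordId_ne_wordC2 hn (hPeq.symm.trans hPQ).symm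
        · exfalso
          have hQ := win_B n k hn hk w (w ⟨0, hk0⟩) Hd1 Hbig s hs1 hs2 j₂ hjv
          have hPQ := norm_eq j₂ (wordB n (n - 1 - s)) hj₂ hQ
            (wordB_inj (by omega) (by omega)) (wordB_bdd (by omega) (by omega) hn)
          exact wordB_ne_wordC2 hn (by omega) (by omega) (hPeq.symm.trans hPQ).symm
        · exfalso
          have hQ := win_C1 n k hn hk w (w ⟨0, hk0⟩) Hd1 Hbig j₂ hjv
          have hPQ := norm_eq j₂ (wordC1 n) hj₂ hQ (wordC1_inj hn) (wordC1_bdd hn)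
          exact wordC1_ne_wordC2 hn (hPeq.symm.trans hPQ).symm
        · apply Fin.ext
          show j₂.val = k + n
          omega
end
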